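/- arXiv:2106.02538 — 9 statements merged into one kernel-verified Lean document; each statement's English description precedes it below -/
import Mathlib

section
/- For any two persistence diagrams X and Y, the bottleneck distance is the vanishing point of the bottleneck profile: W_∞(X,Y) = inf{t > 0 : D_{X,Y}(t) = 0}. In particular, D_{X,Y}(t) = 0 for every t > W_∞(X,Y). -/
open scoped ENNReal Classical

/-- A persistence diagram: a finite multiset of points strictly above the diagonal of `ℝ²`.
Distances in `ℝ × ℝ` are measured by the product (sup-norm, i.e. `p = ∞`) metric `dist`. -/
structure PD where
  pts : Multiset (ℝ × ℝ)
  birth_lt_death : ∀ x ∈ pts, x.1 < x.2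

/-- Orthogonal projection of a point onto the diagonal `Δ = {(t, t) : t ∈ ℝ}`. -/
noncomputable def diagProj (x : ℝ × ℝ) : ℝ × ℝ := ((x.1 + x.2) / 2, (x.1 + x.2) / 2)

/-- The distance of a matched pair: a pair of two diagonal points counts as distance `0`,
otherwise the distance in `ℝ × ℝ` is used. -/
noncomputable def pairCost (u v : ℝ × ℝ) : ℝ :=
  if u.1 = u.2 ∧ v.1 = v.2 then 0 else dist u v

/-- `P` encodes a matching, i.e. a bijection `η : X₀ ⊔ Y₀' → Y₀ ⊔ X₀'`, as the multiset of
matched pairs `(u, η u)`: its first marginal is `X₀ ⊔ Y₀'` and its second is `Y₀ ⊔ X₀'`. -/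
def IsMatching (X Y : PD) (P : Multiset ((ℝ × ℝ) × (ℝ × ℝ))) : Prop :=
  P.map Prod.fst = X.pts + Y.pts.map diagProj ∧
  P.map Prod.snd = Y.pts + X.pts.map diagProj

/-- The bottleneck profile `D_{X,Y}(t) = inf_η |{u : d(u, η u) > t}|`. -/
noncomputable def bprofile (X Y : PD) (t : ℝ) : ℝ≥0∞ :=
  ⨅ P : {P : Multiset ((ℝ × ℝ) × (ℝ × ℝ)) // IsMatching X Y P},
    ((Multiset.countP (fun uv => t < pairCost uv.1 uv.2) P.1 : ℕ) : ℝ≥0∞)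

/-- The bottleneck distance `W_∞(X,Y) = inf_η sup_u d(u, η u)`, expressed as the infimum of
all `r` bounding every matched distance of some matching. -/
noncomputable def bottleneckDist (X Y : PD) : ℝ :=
  sInf {r : ℝ | ∃ P, IsMatching X Y P ∧ ∀ uv ∈ P, pairCost uv.1 uv.2 ≤ r}

lemma pairCost_nonneg (u v : ℝ × ℝ) : 0 ≤ pairCost u v := by
  unfold pairCost; split
  · exact le_refl 0
  · exact dist_nonneg

lemma canonical_matching (X Y : PD) :
    IsMatching X Y (X.pts.map (fun x => (x, diagProj x)) + Y.pts.map (fun y => (diagProj y, y))) := by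
  constructor
  · simp [Multiset.map_map, Function.comp]
  · simp [Multiset.map_map, Function.comp]
    exact add_comm _ _

lemma matchSet_nonempty (X Y : PD) :
    {r : ℝ | ∃ P, IsMatching X Y P ∧ ∀ uv ∈ P, pairCost uv.1 uv.2 ≤ r}.Nonempty := by
  set P := X.pts.map (fun x => (x, diagProj x)) + Y.pts.map (fun y => (diagProj y, y))
  refine ⟨(P.map fun uv => |pairCost uv.1 uv.2|).sum, P, canonical_matching X Y, ?_⟩
  intro uv huv
  calc pairCost uv.1 uv.2 ≤ |pairCost uv.1 uv.2| := le_abs_self _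
    _ ≤ _ := Multiset.single_le_sum (by intro x hx; obtain ⟨a, _, rfl⟩ := Multiset.mem_map.1 hx; positivity)
        _ (Multiset.mem_map_of_mem (fun uv => |pairCost uv.1 uv.2|) huv)

lemma matchSet_upward (X Y : PD) {r r' : ℝ}
    (h : r ∈ {r : ℝ | ∃ P, IsMatching X Y P ∧ ∀ uv ∈ P, pairCost uv.1 uv.2 ≤ r}) (hle : r ≤ r') :
    r' ∈ {r : ℝ | ∃ P, IsMatching X Y P ∧ ∀ uv ∈ P, pairCost uv.1 uv.2 ≤ r} := by
  obtain ⟨P, hP, hb⟩ := h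
  exact ⟨P, hP, fun uv huv => (hb uv huv).trans hle⟩

lemma bprofile_eq_zero_iff (X Y : PD) (t : ℝ) :
    bprofile X Y t = 0 ↔
      t ∈ {r : ℝ | ∃ P, IsMatching X Y P ∧ ∀ uv ∈ P, pairCost uv.1 uv.2 ≤ r} := by
  constructor
  · intro h
    by_contra hc
    have h1 : (1 : ℝ≥0∞) ≤ bprofile X Y t := by
      refine le_iInf fun P => ?_
      have : Multiset.countP (fun uv => t < pairCost uv.1 uv.2) P.1 ≠ 0 := by
        intro h0
        rw [Multiset.countP_eq_zero] at h0
        exact hc ⟨P.1, P.2, fun uv huv => not_lt.1 (h0 uv huv)⟩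
      exact_mod_cast Nat.one_le_iff_ne_zero.2 this
    rw [h] at h1
    simp at h1
  · rintro ⟨P, hP, hb⟩
    refine le_antisymm ?_ zero_le
    have : ((Multiset.countP (fun uv => t < pairCost uv.1 uv.2) P : ℕ) : ℝ≥0∞) = 0 := by
      norm_cast
      rw [Multiset.countP_eq_zero]
      exact fun uv huv => not_lt.2 (hb uv huv)
    calc bprofile X Y t ≤ _ := iInf_le _ (⟨P, hP⟩ : {P // IsMatching X Y P})
      _ = 0 := this


/-- The bottleneck distance is the vanishing point of the bottleneck profile:
`W_∞(X,Y) = inf {t > 0 : D_{X,Y}(t) = 0}`; in particular `D_{X,Y}(t) = 0` for every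
`t > W_∞(X,Y)`. -/
theorem bottleneckDist_eq_inf_bprofile_zero (X Y : PD) :
    bottleneckDist X Y = sInf {t : ℝ | 0 < t ∧ bprofile X Y t = 0} ∧
    ∀ t : ℝ, bottleneckDist X Y < t → bprofile X Y t = 0 := by
  set S := {r : ℝ | ∃ P, IsMatching X Y P ∧ ∀ uv ∈ P, pairCost uv.1 uv.2 ≤ r} with hS
  have hSne : S.Nonempty := matchSet_nonempty X Y
  have hTset : {t : ℝ | 0 < t ∧ bprofile X Y t = 0} = {t : ℝ | 0 < t} ∩ S := by
    ext t
    simp only [Set.mem_setOf_eq, Set.mem_inter_iff, bprofile_eq_zero_iff X Y t]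
    exact Iff.rfl
  have hpart2 : ∀ t : ℝ, bottleneckDist X Y < t → bprofile X Y t = 0 := by
    intro t ht
    rw [bprofile_eq_zero_iff]
    obtain ⟨s, hs, hst⟩ := exists_lt_of_csInf_lt hSne ht
    exact matchSet_upward X Y hs hst.le
  refine ⟨?_, hpart2⟩
  rw [hTset]
  by_cases hemp : X.pts = 0 ∧ Y.pts = 0
  · -- S = univ
    have hSuniv : S = Set.univ := by
      ext r
      simp only [Set.mem_univ, iff_true, hS, Set.mem_setOf_eq]
      refine ⟨0, ⟨?_, ?_⟩, by simp⟩ <;> simp [hemp.1, hemp.2]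
    rw [hSuniv, Set.inter_univ]
    rw [show bottleneckDist X Y = sInf S from rfl, hSuniv]
    rw [Real.sInf_of_not_bddBelow (by
      intro ⟨b, hb⟩
      have := hb (Set.mem_univ (b - 1))
      linarith)]
    have : {t : ℝ | 0 < t} = Set.Ioi (0:ℝ) := rfl
    rw [this, csInf_Ioi]
  · -- S ⊆ [0, ∞)
    have hSnonneg : ∀ r ∈ S, (0:ℝ) ≤ r := by
      rintro r ⟨P, ⟨hf, hs⟩, hb⟩
      have hPne : P ≠ 0 := by
        intro h0
        rw [h0] at hf
        simp only [Multiset.map_zero] at hf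
        have := hf.symm
        rw [add_eq_zero] at this
        exact hemp ⟨this.1, by
          have := this.2
          rwa [Multiset.map_eq_zero] at this⟩
      obtain ⟨uv, huv⟩ := Multiset.exists_mem_of_ne_zero hPne
      exact le_trans (pairCost_nonneg uv.1 uv.2) (hb uv huv)
    have hbdd : BddBelow S := ⟨0, hSnonneg⟩
    have hSposne : ({t : ℝ | 0 < t} ∩ S).Nonempty := by
      obtain ⟨r, hr⟩ := hSne
      exact ⟨max r 1, lt_of_lt_of_le zero_lt_one (le_max_right r 1),
        matchSet_upward X Y hr (le_max_left r 1)⟩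
    refine le_antisymm (csInf_le_csInf hbdd hSposne Set.inter_subset_right) ?_
    refine le_of_forall_pos_le_add fun ε hε => ?_
    refine csInf_le ⟨0, fun t ht => ht.1.le⟩ ⟨?_, ?_⟩
    · have h0 : (0:ℝ) ≤ sInf S := le_csInf hSne hSnonneg
      show (0:ℝ) < sInf S + ε
      linarith
    · obtain ⟨s, hs, hlt⟩ := exists_lt_of_csInf_lt hSne (lt_add_of_pos_right (sInf S) hε)
      exact matchSet_upward X Y hs hlt.le
end

section
/- For any three persistence diagrams X, Y, Z and all s, t ≥ 0, the bottleneck profiles satisfy the scaled triangle inequality D_{X,Z}(s + t) ≤ D_{X,Y}(s) + D_{Y,Z}(t). -/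
open scoped ENNReal Classical

namespace BPAux

lemma countP_map' {α β : Type*} (f : α → β) (s : Multiset α) (p : β → Prop) [DecidablePred p]
    [DecidablePred (fun a => p (f a))] :
    Multiset.countP p (s.map f) = Multiset.countP (fun a => p (f a)) s := by
  induction s using Multiset.induction_on with
  | empty => simp
  | cons a s ih => by_cases h : p (f a) <;> simp [Multiset.countP_cons, h, ih]

lemma countP_le_countP {α : Type*} (p q : α → Prop) [DecidablePred p] [DecidablePred q]
    (s : Multiset α) (h : ∀ a ∈ s, p a → q a) : s.countP p ≤ s.countP q := by
  induction s using Multiset.induction_on with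
  | empty => simp
  | cons a s ih =>
    have ih' := ih (fun b hb hpb => h b (Multiset.mem_cons_of_mem hb) hpb)
    have hpq := h a (Multiset.mem_cons_self a s)
    simp only [Multiset.countP_cons]
    split_ifs with h1 h2
    · omega
    · exact absurd (hpq h1) h2
    · omega
    · omega

lemma countP_or {α : Type*} (p q : α → Prop) [DecidablePred p] [DecidablePred q]
    [DecidablePred (fun a => p a ∨ q a)] (s : Multiset α) :
    s.countP (fun a => p a ∨ q a) ≤ s.countP p + s.countP q := by
  induction s using Multiset.induction_on with
  | empty => simp
  | cons a s ih =>
    simp only [Multiset.countP_cons]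
    split_ifs <;> first | omega | (exfalso; tauto)

lemma filter_map' {β γ : Type*} (p : γ → Prop) [DecidablePred p] (f : β → γ) (s : Multiset β)
    [DecidablePred (fun b => p (f b))] :
    (s.map f).filter p = (s.filter (fun b => p (f b))).map f := by
  induction s using Multiset.induction_on with
  | empty => simp
  | cons a s ih => by_cases h : p (f a) <;> simp [Multiset.filter_cons, h, ih]

lemma mem_map_diagProj_diag {s : Multiset (ℝ × ℝ)} {v : ℝ × ℝ} (h : v ∈ s.map diagProj) :
    v.1 = v.2 := by
  obtain ⟨w, -, rfl⟩ := Multiset.mem_map.mp h; rfl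

lemma dist_diagProj_le (u v : ℝ × ℝ) (hv : v.1 = v.2) : dist u (diagProj u) ≤ dist u v := by
  have h1 : dist u (diagProj u) = |u.1 - u.2| / 2 := by
    rw [Prod.dist_eq]
    have e1 : dist u.1 (diagProj u).1 = |u.1 - u.2| / 2 := by
      rw [Real.dist_eq]
      show |u.1 - (u.1 + u.2) / 2| = _
      rw [show u.1 - (u.1 + u.2) / 2 = (u.1 - u.2) / 2 by ring, abs_div, abs_two]
    have e2 : dist u.2 (diagProj u).2 = |u.1 - u.2| / 2 := by
      rw [Real.dist_eq]
      show |u.2 - (u.1 + u.2) / 2| = _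
      rw [show u.2 - (u.1 + u.2) / 2 = -((u.1 - u.2) / 2) by ring, abs_neg, abs_div, abs_two]
    rw [e1, e2, max_self]
  rw [h1, Prod.dist_eq, Real.dist_eq, Real.dist_eq]
  have h3 : |u.1 - u.2| ≤ |u.1 - v.1| + |u.2 - v.2| := by
    have h7 := abs_sub_le u.1 v.1 u.2
    have h8 : |v.1 - u.2| = |u.2 - v.2| := by rw [hv, abs_sub_comm]
    linarith
  have h4 := le_max_left (|u.1 - v.1|) (|u.2 - v.2|)
  have h5 := le_max_right (|u.1 - v.1|) (|u.2 - v.2|)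
  have h6 : max (|u.1 - v.1|) (|u.2 - v.2|) = |u.1 - v.1| ⊔ |u.2 - v.2| := rfl
  rw [← h6]
  linarith

lemma dist_diagProj_le' (w v : ℝ × ℝ) (hv : v.1 = v.2) : dist (diagProj w) w ≤ dist v w := by
  rw [dist_comm, dist_comm v w]; exact dist_diagProj_le w v hv

lemma pairCost_eq_dist {u v : ℝ × ℝ} (h : ¬(u.1 = u.2 ∧ v.1 = v.2)) : pairCost u v = dist u v := by
  simp only [pairCost]; exact if_neg h

lemma pairCost_eq_zero' {u v : ℝ × ℝ} (h1 : u.1 = u.2) (h2 : v.1 = v.2) : pairCost u v = 0 := by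
  simp only [pairCost]; exact if_pos ⟨h1, h2⟩

lemma glue : ∀ (A B : Multiset ((ℝ × ℝ) × (ℝ × ℝ))), A.map Prod.snd = B.map Prod.fst →
    ∃ T : Multiset ((ℝ × ℝ) × (ℝ × ℝ) × (ℝ × ℝ)),
      T.map (fun a => (a.1, a.2.1)) = A ∧ T.map Prod.snd = B := by
  intro A
  induction A using Multiset.induction_on with
  | empty =>
    intro B h
    refine ⟨0, by simp, ?_⟩
    have h' : B.map Prod.fst = 0 := by simpa using h.symm
    rw [Multiset.map_eq_zero] at h'
    simp [h']
  | cons e A ih =>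
    intro B h
    have he : e.2 ∈ B.map Prod.fst := by
      rw [← h, Multiset.map_cons]; exact Multiset.mem_cons_self _ _
    obtain ⟨f, hfB, hfe⟩ := Multiset.mem_map.mp he
    have hB : B = f ::ₘ B.erase f := (Multiset.cons_erase hfB).symm
    have h2 : A.map Prod.snd = (B.erase f).map Prod.fst := by
      have h' := h
      rw [hB, Multiset.map_cons, Multiset.map_cons, hfe] at h'
      exact (Multiset.cons_inj_right _).mp h'
    obtain ⟨T, hT1, hT2⟩ := ih (B.erase f) h2
    refine ⟨(e.1, f) ::ₘ T, ?_, ?_⟩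
    · rw [Multiset.map_cons, hT1]
      congr 1
      show (e.1, f.1) = e
      rw [hfe]
    · rw [Multiset.map_cons, hT2]
      exact hB.symm



set_option maxHeartbeats 1000000 in
lemma compose (X Y Z : PD) (s t : ℝ) (hs : 0 ≤ s) (ht : 0 ≤ t)
    (P Q : Multiset ((ℝ × ℝ) × (ℝ × ℝ))) (hP : IsMatching X Y P) (hQ : IsMatching Y Z Q) :
    ∃ R, IsMatching X Z R ∧
      Multiset.countP (fun uv => s + t < pairCost uv.1 uv.2) R ≤
        Multiset.countP (fun uv => s < pairCost uv.1 uv.2) P +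
        Multiset.countP (fun uv => t < pairCost uv.1 uv.2) Q := by
  classical
  obtain ⟨hPf, hPs⟩ := hP
  obtain ⟨hQf, hQs⟩ := hQ
  have hXnd : ∀ v ∈ X.pts, ¬ v.1 = v.2 := fun v hv => ne_of_lt (X.birth_lt_death v hv)
  have hYnd : ∀ v ∈ Y.pts, ¬ v.1 = v.2 := fun v hv => ne_of_lt (Y.birth_lt_death v hv)
  have hZnd : ∀ v ∈ Z.pts, ¬ v.1 = v.2 := fun v hv => ne_of_lt (Z.birth_lt_death v hv)
  have hsplit_marg : ∀ (A B : Multiset (ℝ × ℝ)), (∀ v ∈ A, ¬ v.1 = v.2) →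
      (A + B.map diagProj).filter (fun v => ¬ v.1 = v.2) = A := by
    intro A B hA
    rw [Multiset.filter_add, Multiset.filter_eq_self.2 hA,
      Multiset.filter_eq_nil.2 (fun v hv => not_not_intro (mem_map_diagProj_diag hv)), add_zero]
  -- splits of P and Q
  have hPsplit : P.filter (fun e => e.2.1 = e.2.2) + P.filter (fun e => ¬ e.2.1 = e.2.2) = P :=
    Multiset.filter_add_not _ P
  have hQsplit : Q.filter (fun e => e.1.1 = e.1.2) + Q.filter (fun e => ¬ e.1.1 = e.1.2) = Q :=
    Multiset.filter_add_not _ Q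
  -- the middle marginals agree
  have hP1s : (P.filter (fun e => ¬ e.2.1 = e.2.2)).map Prod.snd = Y.pts := by
    have e1 : (P.map Prod.snd).filter (fun v => ¬ v.1 = v.2) = Y.pts := by
      rw [hPs]; exact hsplit_marg _ _ hYnd
    rw [← e1, filter_map']
  have hQ1f : (Q.filter (fun e => ¬ e.1.1 = e.1.2)).map Prod.fst = Y.pts := by
    have e1 : (Q.map Prod.fst).filter (fun v => ¬ v.1 = v.2) = Y.pts := by
      rw [hQf]; exact hsplit_marg _ _ hYnd
    rw [← e1, filter_map']
  obtain ⟨T, hT1, hT2⟩ := glue (P.filter (fun e => ¬ e.2.1 = e.2.2))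
    (Q.filter (fun e => ¬ e.1.1 = e.1.2)) (by rw [hP1s, hQ1f])
  -- abbreviations
  set P1 := P.filter (fun e => ¬ e.2.1 = e.2.2) with hP1d
  set P2 := P.filter (fun e => e.2.1 = e.2.2) with hP2d
  set Q1 := Q.filter (fun e => ¬ e.1.1 = e.1.2) with hQ1d
  set Q2 := Q.filter (fun e => e.1.1 = e.1.2) with hQ2d
  set Tu := T.filter (fun a => ¬ a.1.1 = a.1.2) with hTud
  set Td := T.filter (fun a => a.1.1 = a.1.2) with hTdd0
  have hTsplit : Td + Tu = T := Multiset.filter_add_not _ T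
  set Tnn := Tu.filter (fun a => ¬ a.2.2.1 = a.2.2.2) with hTnnd
  set Tnd := Tu.filter (fun a => a.2.2.1 = a.2.2.2) with hTndd
  have hTusplit : Tnd + Tnn = Tu := Multiset.filter_add_not _ Tu
  set Tdn := Td.filter (fun a => ¬ a.2.2.1 = a.2.2.2) with hTdnd
  set Tdd := Td.filter (fun a => a.2.2.1 = a.2.2.2) with hTddd
  have hTdsplit : Tdd + Tdn = Td := Multiset.filter_add_not _ Td
  set P2' := P2.filter (fun e => ¬ e.1.1 = e.1.2) with hP2'd
  set P2d := P2.filter (fun e => e.1.1 = e.1.2) with hP2dd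
  have hP2split : P2d + P2' = P2 := Multiset.filter_add_not _ P2
  set Q2' := Q2.filter (fun e => ¬ e.2.1 = e.2.2) with hQ2'd
  set Q2d := Q2.filter (fun e => e.2.1 = e.2.2) with hQ2dd
  have hQ2split : Q2d + Q2' = Q2 := Multiset.filter_add_not _ Q2
  set Tw := T.filter (fun a => ¬ a.2.2.1 = a.2.2.2) with hTwd
  have hTwsplit : Tw = Tdn + Tnn := by
    rw [hTwd]
    conv_lhs => rw [← hTsplit]
    rw [Multiset.filter_add, ← hTdnd, ← hTnnd]
  have hTuu : Tu.map (fun a => a.1) = Tnd.map (fun a => a.1) + Tnn.map (fun a => a.1) := by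
    rw [← hTusplit, Multiset.map_add]
  have hBw : Tw.map (fun a => a.2.2) = Tdn.map (fun a => a.2.2) + Tnn.map (fun a => a.2.2) := by
    rw [hTwsplit, Multiset.map_add]
  -- the X-marginal decomposition
  have hA : X.pts = P2'.map (fun e => e.1) + (Tnd.map (fun a => a.1) + Tnn.map (fun a => a.1)) := by
    rw [← hTuu]
    have e2 : (P.map Prod.fst).filter (fun v => ¬ v.1 = v.2) = X.pts := by
      rw [hPf]; exact hsplit_marg _ _ hXnd
    rw [← e2, ← hPsplit, Multiset.map_add, Multiset.filter_add]
    congr 1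
    · rw [hP2'd, filter_map']
    · have e3 : P1.map Prod.fst = T.map (fun a => a.1) := by
        rw [← hT1, Multiset.map_map]; rfl
      rw [e3, filter_map']
  -- the Z-marginal decomposition
  have hB : Z.pts = Q2'.map (fun e => e.2) + (Tdn.map (fun a => a.2.2) + Tnn.map (fun a => a.2.2)) := by
    rw [← hBw]
    have e2 : (Q.map Prod.snd).filter (fun v => ¬ v.1 = v.2) = Z.pts := by
      rw [hQs]; exact hsplit_marg _ _ hZnd
    rw [← e2, ← hQsplit, Multiset.map_add, Multiset.filter_add]
    congr 1
    · rw [hQ2'd, filter_map']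
    · have e3 : Q1.map Prod.snd = T.map (fun a => a.2.2) := by
        rw [← hT2, Multiset.map_map]; rfl
      rw [e3, filter_map']
  -- consumed / leftover diagonal points
  set NX := (Tnd.map (fun a => a.1) + P2'.map (fun e => e.1)).map diagProj with hNXd
  set NZ := (Tdn.map (fun a => a.2.2) + Q2'.map (fun e => e.2)).map diagProj with hNZd
  set LT := X.pts.map diagProj - NX with hLTd
  set LS := Z.pts.map diagProj - NZ with hLSd
  have hNXle : NX ≤ X.pts.map diagProj := by
    rw [hNXd]
    refine Multiset.map_le_map ?_
    refine Multiset.le_iff_exists_add.mpr ⟨Tnn.map (fun a => a.1), ?_⟩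
    rw [hA]
    refine Multiset.ext.mpr fun x => ?_
    simp only [Multiset.count_add]; omega
  have hNZle : NZ ≤ Z.pts.map diagProj := by
    rw [hNZd]
    refine Multiset.map_le_map ?_
    refine Multiset.le_iff_exists_add.mpr ⟨Tnn.map (fun a => a.2.2), ?_⟩
    rw [hB]
    refine Multiset.ext.mpr fun x => ?_
    simp only [Multiset.count_add]; omega
  have hLTN : LT + NX = X.pts.map diagProj := tsub_add_cancel_of_le hNXle
  have hLSN : LS + NZ = Z.pts.map diagProj := tsub_add_cancel_of_le hNZle
  -- cardinalities of the leftovers agree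
  have hcLT : Multiset.card LT = Multiset.card Tnn := by
    have c1 := congrArg Multiset.card hLTN
    have c2 := congrArg Multiset.card hA
    have c3 : Multiset.card NX = Multiset.card Tnd + Multiset.card P2' := by
      rw [hNXd]; simp [Multiset.card_add]
    simp only [Multiset.card_add, Multiset.card_map] at c1 c2
    omega
  have hcLS : Multiset.card LS = Multiset.card Tnn := by
    have c1 := congrArg Multiset.card hLSN
    have c2 := congrArg Multiset.card hB
    have c3 : Multiset.card NZ = Multiset.card Tdn + Multiset.card Q2' := by
      rw [hNZd]; simp [Multiset.card_add]
    simp only [Multiset.card_add, Multiset.card_map] at c1 c2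
    omega
  have hlen : LT.toList.length = LS.toList.length := by
    rw [Multiset.length_toList, Multiset.length_toList, hcLT, hcLS]
  -- the pad and its marginals
  have hR6f : (↑(LS.toList.zip LT.toList) : Multiset ((ℝ × ℝ) × (ℝ × ℝ))).map Prod.fst = LS := by
    rw [Multiset.map_coe, List.map_fst_zip (le_of_eq hlen.symm), Multiset.coe_toList]
  have hR6s : (↑(LS.toList.zip LT.toList) : Multiset ((ℝ × ℝ) × (ℝ × ℝ))).map Prod.snd = LT := by
    rw [Multiset.map_coe, List.map_snd_zip (le_of_eq hlen), Multiset.coe_toList]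
  -- expansion of NX, NZ under diagProj
  have hNXsplit : NX = Tnd.map (fun a => diagProj a.1) + P2'.map (fun e => diagProj e.1) := by
    rw [hNXd, Multiset.map_add, Multiset.map_map, Multiset.map_map]; rfl
  have hNZsplit : NZ = Tdn.map (fun a => diagProj a.2.2) + Q2'.map (fun e => diagProj e.2) := by
    rw [hNZd, Multiset.map_add, Multiset.map_map, Multiset.map_map]; rfl
  refine ⟨Tnn.map (fun a => ((a.1 : ℝ × ℝ), a.2.2))
      + Tnd.map (fun a => (a.1, diagProj a.1))
      + Tdn.map (fun a => (diagProj a.2.2, a.2.2))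
      + P2'.map (fun e => (e.1, diagProj e.1))
      + Q2'.map (fun e => (diagProj e.2, e.2))
      + ↑(LS.toList.zip LT.toList), ⟨?_, ?_⟩, ?_⟩
  · -- first marginal
    simp only [Multiset.map_add, Multiset.map_map, hR6f]
    have m1 : Tnn.map (Prod.fst ∘ fun a => ((a.1 : ℝ × ℝ), a.2.2)) = Tnn.map (fun a => a.1) := rfl
    have m2 : Tnd.map (Prod.fst ∘ fun a => ((a.1 : ℝ × ℝ), diagProj a.1)) = Tnd.map (fun a => a.1) := rfl
    have m3 : Tdn.map (Prod.fst ∘ fun a => (diagProj a.2.2, (a.2.2 : ℝ × ℝ))) = Tdn.map (fun a => diagProj a.2.2) := rfl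
    have m4 : P2'.map (Prod.fst ∘ fun e => ((e.1 : ℝ × ℝ), diagProj e.1)) = P2'.map (fun e => e.1) := rfl
    have m5 : Q2'.map (Prod.fst ∘ fun e => (diagProj e.2, (e.2 : ℝ × ℝ))) = Q2'.map (fun e => diagProj e.2) := rfl
    rw [m1, m2, m3, m4, m5, hA, ← hLSN, hNZsplit]
    refine Multiset.ext.mpr fun x => ?_
    simp only [Multiset.count_add]; omega
  · -- second marginal
    simp only [Multiset.map_add, Multiset.map_map, hR6s]
    have m1 : Tnn.map (Prod.snd ∘ fun a => ((a.1 : ℝ × ℝ), a.2.2)) = Tnn.map (fun a => a.2.2) := rfl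
    have m2 : Tnd.map (Prod.snd ∘ fun a => ((a.1 : ℝ × ℝ), diagProj a.1)) = Tnd.map (fun a => diagProj a.1) := rfl
    have m3 : Tdn.map (Prod.snd ∘ fun a => (diagProj a.2.2, (a.2.2 : ℝ × ℝ))) = Tdn.map (fun a => a.2.2) := rfl
    have m4 : P2'.map (Prod.snd ∘ fun e => ((e.1 : ℝ × ℝ), diagProj e.1)) = P2'.map (fun e => diagProj e.1) := rfl
    have m5 : Q2'.map (Prod.snd ∘ fun e => (diagProj e.2, (e.2 : ℝ × ℝ))) = Q2'.map (fun e => e.2) := rfl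
    rw [m1, m2, m3, m4, m5, hB, ← hLTN, hNXsplit]
    refine Multiset.ext.mpr fun x => ?_
    simp only [Multiset.count_add]; omega
  · -- the count estimate
    -- membership facts
    have hmT : ∀ a ∈ T, ¬ a.2.1.1 = a.2.1.2 := by
      intro a ha
      have h1 : Prod.snd a ∈ Q1 := by rw [← hT2]; exact Multiset.mem_map_of_mem _ ha
      rw [hQ1d] at h1
      exact (Multiset.mem_filter.mp h1).2
    have hmTnn : ∀ a ∈ Tnn, (a ∈ T ∧ ¬ a.1.1 = a.1.2) ∧ ¬ a.2.2.1 = a.2.2.2 := by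
      intro a ha
      rw [hTnnd] at ha
      obtain ⟨ha1, hw⟩ := Multiset.mem_filter.mp ha
      rw [hTud] at ha1
      exact ⟨Multiset.mem_filter.mp ha1, hw⟩
    have hmTnd : ∀ a ∈ Tnd, (a ∈ T ∧ ¬ a.1.1 = a.1.2) ∧ a.2.2.1 = a.2.2.2 := by
      intro a ha
      rw [hTndd] at ha
      obtain ⟨ha1, hw⟩ := Multiset.mem_filter.mp ha
      rw [hTud] at ha1
      exact ⟨Multiset.mem_filter.mp ha1, hw⟩
    have hmTdn : ∀ a ∈ Tdn, (a ∈ T ∧ a.1.1 = a.1.2) ∧ ¬ a.2.2.1 = a.2.2.2 := by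
      intro a ha
      rw [hTdnd] at ha
      obtain ⟨ha1, hw⟩ := Multiset.mem_filter.mp ha
      rw [hTdd0] at ha1
      exact ⟨Multiset.mem_filter.mp ha1, hw⟩
    have hmP2' : ∀ e ∈ P2', e.2.1 = e.2.2 ∧ ¬ e.1.1 = e.1.2 := by
      intro e he
      rw [hP2'd] at he
      obtain ⟨he1, h2⟩ := Multiset.mem_filter.mp he
      rw [hP2d] at he1
      exact ⟨(Multiset.mem_filter.mp he1).2, h2⟩
    have hmQ2' : ∀ e ∈ Q2', e.1.1 = e.1.2 ∧ ¬ e.2.1 = e.2.2 := by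
      intro e he
      rw [hQ2'd] at he
      obtain ⟨he1, h2⟩ := Multiset.mem_filter.mp he
      rw [hQ2d] at he1
      exact ⟨(Multiset.mem_filter.mp he1).2, h2⟩
    simp only [Multiset.countP_add]
    have hR1 : Multiset.countP (fun uv => s + t < pairCost uv.1 uv.2)
        (Tnn.map (fun a => ((a.1 : ℝ × ℝ), a.2.2)))
        = Multiset.countP (fun a => s + t < pairCost a.1 a.2.2) Tnn := by rw [countP_map']
    have hR2 : Multiset.countP (fun uv => s + t < pairCost uv.1 uv.2)
        (Tnd.map (fun a => ((a.1 : ℝ × ℝ), diagProj a.1)))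
        = Multiset.countP (fun a => s + t < pairCost a.1 (diagProj a.1)) Tnd := by rw [countP_map']
    have hR3 : Multiset.countP (fun uv => s + t < pairCost uv.1 uv.2)
        (Tdn.map (fun a => (diagProj a.2.2, (a.2.2 : ℝ × ℝ))))
        = Multiset.countP (fun a => s + t < pairCost (diagProj a.2.2) a.2.2) Tdn := by rw [countP_map']
    have hR4 : Multiset.countP (fun uv => s + t < pairCost uv.1 uv.2)
        (P2'.map (fun e => ((e.1 : ℝ × ℝ), diagProj e.1)))
        = Multiset.countP (fun e => s + t < pairCost e.1 (diagProj e.1)) P2' := by rw [countP_map']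
    have hR5 : Multiset.countP (fun uv => s + t < pairCost uv.1 uv.2)
        (Q2'.map (fun e => (diagProj e.2, (e.2 : ℝ × ℝ))))
        = Multiset.countP (fun e => s + t < pairCost (diagProj e.2) e.2) Q2' := by rw [countP_map']
    have h6 : Multiset.countP (fun uv => s + t < pairCost uv.1 uv.2)
        (↑(LS.toList.zip LT.toList) : Multiset ((ℝ × ℝ) × (ℝ × ℝ))) = 0 := by
      refine Multiset.countP_eq_zero.2 ?_
      intro e he hlt
      have he' : (e.1, e.2) ∈ LS.toList.zip LT.toList := by
        rw [Prod.mk.eta]; exact Multiset.mem_coe.mp he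
      obtain ⟨h1, h2⟩ := List.of_mem_zip he'
      have hLSle : LS ≤ Z.pts.map diagProj := by rw [hLSd]; exact tsub_le_self
      have hLTle : LT ≤ X.pts.map diagProj := by rw [hLTd]; exact tsub_le_self
      have d1 : e.1.1 = e.1.2 :=
        mem_map_diagProj_diag (Multiset.mem_of_le hLSle (Multiset.mem_toList.mp h1))
      have d2 : e.2.1 = e.2.2 :=
        mem_map_diagProj_diag (Multiset.mem_of_le hLTle (Multiset.mem_toList.mp h2))
      have hlt' : s + t < pairCost e.1 e.2 := hlt
      rw [pairCost_eq_zero' d1 d2] at hlt'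
      linarith
    have hb1 : Multiset.countP (fun a => s + t < pairCost a.1 a.2.2) Tnn ≤
        Multiset.countP (fun a => s < pairCost a.1 a.2.1) Tnn +
        Multiset.countP (fun a => t < pairCost a.2.1 a.2.2) Tnn := by
      refine le_trans (countP_le_countP _ _ _ ?_) (countP_or _ _ _)
      intro a ha hlt
      obtain ⟨⟨haT, hu⟩, hw⟩ := hmTnn a ha
      have hy := hmT a haT
      have hlt' : s + t < pairCost a.1 a.2.2 := hlt
      have e1 : pairCost a.1 a.2.1 = dist a.1 a.2.1 := pairCost_eq_dist (fun hc => hu hc.1)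
      have e2 : pairCost a.2.1 a.2.2 = dist a.2.1 a.2.2 := pairCost_eq_dist (fun hc => hy hc.1)
      have e3 : pairCost a.1 a.2.2 = dist a.1 a.2.2 := pairCost_eq_dist (fun hc => hu hc.1)
      have htri := dist_triangle a.1 a.2.1 a.2.2
      by_contra hcon
      push_neg at hcon
      obtain ⟨hc1, hc2⟩ := hcon
      rw [e1] at hc1; rw [e2] at hc2; rw [e3] at hlt'
      linarith
    have hb2 : Multiset.countP (fun a => s + t < pairCost a.1 (diagProj a.1)) Tnd ≤
        Multiset.countP (fun a => s < pairCost a.1 a.2.1) Tnd +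
        Multiset.countP (fun a => t < pairCost a.2.1 a.2.2) Tnd := by
      refine le_trans (countP_le_countP _ _ _ ?_) (countP_or _ _ _)
      intro a ha hlt
      obtain ⟨⟨haT, hu⟩, hw⟩ := hmTnd a ha
      have hy := hmT a haT
      have hlt' : s + t < pairCost a.1 (diagProj a.1) := hlt
      have e1 : pairCost a.1 a.2.1 = dist a.1 a.2.1 := pairCost_eq_dist (fun hc => hu hc.1)
      have e2 : pairCost a.2.1 a.2.2 = dist a.2.1 a.2.2 := pairCost_eq_dist (fun hc => hy hc.1)
      have e3 : pairCost a.1 (diagProj a.1) = dist a.1 (diagProj a.1) :=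
        pairCost_eq_dist (fun hc => hu hc.1)
      have hd1 : dist a.1 (diagProj a.1) ≤ dist a.1 a.2.2 := dist_diagProj_le _ _ hw
      have htri := dist_triangle a.1 a.2.1 a.2.2
      by_contra hcon
      push_neg at hcon
      obtain ⟨hc1, hc2⟩ := hcon
      rw [e1] at hc1; rw [e2] at hc2; rw [e3] at hlt'
      linarith
    have hb3 : Multiset.countP (fun a => s + t < pairCost (diagProj a.2.2) a.2.2) Tdn ≤
        Multiset.countP (fun a => s < pairCost a.1 a.2.1) Tdn +
        Multiset.countP (fun a => t < pairCost a.2.1 a.2.2) Tdn := by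
      refine le_trans (countP_le_countP _ _ _ ?_) (countP_or _ _ _)
      intro a ha hlt
      obtain ⟨⟨haT, hu⟩, hw⟩ := hmTdn a ha
      have hy := hmT a haT
      have hlt' : s + t < pairCost (diagProj a.2.2) a.2.2 := hlt
      have e1 : pairCost a.1 a.2.1 = dist a.1 a.2.1 := pairCost_eq_dist (fun hc => hy hc.2)
      have e2 : pairCost a.2.1 a.2.2 = dist a.2.1 a.2.2 := pairCost_eq_dist (fun hc => hy hc.1)
      have e3 : pairCost (diagProj a.2.2) a.2.2 = dist (diagProj a.2.2) a.2.2 :=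
        pairCost_eq_dist (fun hc => hw hc.2)
      have hd1 : dist (diagProj a.2.2) a.2.2 ≤ dist a.1 a.2.2 := dist_diagProj_le' _ _ hu
      have htri := dist_triangle a.1 a.2.1 a.2.2
      by_contra hcon
      push_neg at hcon
      obtain ⟨hc1, hc2⟩ := hcon
      rw [e1] at hc1; rw [e2] at hc2; rw [e3] at hlt'
      linarith
    have hb4 : Multiset.countP (fun e => s + t < pairCost e.1 (diagProj e.1)) P2' ≤
        Multiset.countP (fun uv => s < pairCost uv.1 uv.2) P2' := by
      refine countP_le_countP _ _ _ ?_
      intro e he hlt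
      obtain ⟨h2, h1⟩ := hmP2' e he
      have hlt' : s + t < pairCost e.1 (diagProj e.1) := hlt
      have e3 : pairCost e.1 (diagProj e.1) = dist e.1 (diagProj e.1) :=
        pairCost_eq_dist (fun hc => h1 hc.1)
      have e4 : pairCost e.1 e.2 = dist e.1 e.2 := pairCost_eq_dist (fun hc => h1 hc.1)
      have hd := dist_diagProj_le e.1 e.2 h2
      show s < pairCost e.1 e.2
      rw [e3] at hlt'; rw [e4]
      linarith
    have hb5 : Multiset.countP (fun e => s + t < pairCost (diagProj e.2) e.2) Q2' ≤
        Multiset.countP (fun uv => t < pairCost uv.1 uv.2) Q2' := by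
      refine countP_le_countP _ _ _ ?_
      intro e he hlt
      obtain ⟨h1, h2⟩ := hmQ2' e he
      have hlt' : s + t < pairCost (diagProj e.2) e.2 := hlt
      have e3 : pairCost (diagProj e.2) e.2 = dist (diagProj e.2) e.2 :=
        pairCost_eq_dist (fun hc => h2 hc.2)
      have e4 : pairCost e.1 e.2 = dist e.1 e.2 := pairCost_eq_dist (fun hc => h2 hc.2)
      have hd := dist_diagProj_le' e.2 e.1 h1
      show t < pairCost e.1 e.2
      rw [e3] at hlt'; rw [e4]
      linarith
    have hPtot : Multiset.countP (fun uv => s < pairCost uv.1 uv.2) P =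
        (Multiset.countP (fun uv => s < pairCost uv.1 uv.2) P2d +
         Multiset.countP (fun uv => s < pairCost uv.1 uv.2) P2') +
        Multiset.countP (fun uv => s < pairCost uv.1 uv.2) P1 := by
      rw [← hPsplit, Multiset.countP_add, ← hP2split, Multiset.countP_add]
    have hQtot : Multiset.countP (fun uv => t < pairCost uv.1 uv.2) Q =
        (Multiset.countP (fun uv => t < pairCost uv.1 uv.2) Q2d +
         Multiset.countP (fun uv => t < pairCost uv.1 uv.2) Q2') +
        Multiset.countP (fun uv => t < pairCost uv.1 uv.2) Q1 := by
      rw [← hQsplit, Multiset.countP_add, ← hQ2split, Multiset.countP_add]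
    have hP1T : Multiset.countP (fun uv => s < pairCost uv.1 uv.2) P1 =
        Multiset.countP (fun a => s < pairCost a.1 a.2.1) T := by
      rw [← hT1, countP_map']
    have hQ1T : Multiset.countP (fun uv => t < pairCost uv.1 uv.2) Q1 =
        Multiset.countP (fun a => t < pairCost a.2.1 a.2.2) T := by
      rw [← hT2, countP_map']
    have hTP : Multiset.countP (fun a => s < pairCost a.1 a.2.1) T =
        (Multiset.countP (fun a => s < pairCost a.1 a.2.1) Tdd +
         Multiset.countP (fun a => s < pairCost a.1 a.2.1) Tdn) +
        (Multiset.countP (fun a => s < pairCost a.1 a.2.1) Tnd +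
         Multiset.countP (fun a => s < pairCost a.1 a.2.1) Tnn) := by
      rw [← hTsplit, ← hTdsplit, ← hTusplit, Multiset.countP_add, Multiset.countP_add,
        Multiset.countP_add]
    have hTQ : Multiset.countP (fun a => t < pairCost a.2.1 a.2.2) T =
        (Multiset.countP (fun a => t < pairCost a.2.1 a.2.2) Tdd +
         Multiset.countP (fun a => t < pairCost a.2.1 a.2.2) Tdn) +
        (Multiset.countP (fun a => t < pairCost a.2.1 a.2.2) Tnd +
         Multiset.countP (fun a => t < pairCost a.2.1 a.2.2) Tnn) := by
      rw [← hTsplit, ← hTdsplit, ← hTusplit, Multiset.countP_add, Multiset.countP_add,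
        Multiset.countP_add]
    rw [hR1, hR2, hR3, hR4, hR5, h6]
    omega

end BPAux

/-- The scaled triangle inequality for bottleneck profiles:
`D_{X,Z}(s + t) ≤ D_{X,Y}(s) + D_{Y,Z}(t)`. -/
theorem bprofile_triangle (X Y Z : PD) (s t : ℝ) (hs : 0 ≤ s) (ht : 0 ≤ t) :
    bprofile X Z (s + t) ≤ bprofile X Y s + bprofile Y Z t := by
  have key : ∀ (P : {P : Multiset ((ℝ × ℝ) × (ℝ × ℝ)) // IsMatching X Y P})
      (Q : {Q : Multiset ((ℝ × ℝ) × (ℝ × ℝ)) // IsMatching Y Z Q}),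
      bprofile X Z (s + t) ≤
        ((Multiset.countP (fun uv => s < pairCost uv.1 uv.2) P.1 : ℕ) : ℝ≥0∞) +
        ((Multiset.countP (fun uv => t < pairCost uv.1 uv.2) Q.1 : ℕ) : ℝ≥0∞) := by
    intro P Q
    obtain ⟨R, hR, hc⟩ := BPAux.compose X Y Z s t hs ht P.1 Q.1 P.2 Q.2
    have h1 : bprofile X Z (s + t) ≤
        ((Multiset.countP (fun uv => s + t < pairCost uv.1 uv.2) R : ℕ) : ℝ≥0∞) := by
      simp only [bprofile]
      exact iInf_le _ (⟨R, hR⟩ : {P : Multiset ((ℝ × ℝ) × (ℝ × ℝ)) // IsMatching X Z P})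
    exact le_trans h1 (by exact_mod_cast hc)
  have h2 : bprofile X Y s + bprofile Y Z t =
      ⨅ P : {P : Multiset ((ℝ × ℝ) × (ℝ × ℝ)) // IsMatching X Y P},
        (((Multiset.countP (fun uv => s < pairCost uv.1 uv.2) P.1 : ℕ) : ℝ≥0∞) +
          bprofile Y Z t) := by
    simp only [bprofile]
    exact ENNReal.iInf_add
  rw [h2]
  refine le_iInf fun P => ?_
  have h3 : ((Multiset.countP (fun uv => s < pairCost uv.1 uv.2) P.1 : ℕ) : ℝ≥0∞) +
      bprofile Y Z t =
      ⨅ Q : {Q : Multiset ((ℝ × ℝ) × (ℝ × ℝ)) // IsMatching Y Z Q},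
        (((Multiset.countP (fun uv => s < pairCost uv.1 uv.2) P.1 : ℕ) : ℝ≥0∞) +
          ((Multiset.countP (fun uv => t < pairCost uv.1 uv.2) Q.1 : ℕ) : ℝ≥0∞)) := by
    simp only [bprofile]
    exact ENNReal.add_iInf
  rw [h3]
  exact le_iInf fun Q => key P Q
end

section
/- The bottleneck profile satisfies D_{X,X}(t) = 0 for every persistence diagram X and every t > 0. Moreover, if X, Y ∈ B̄ satisfy D_{X,Y}(t) = 0 for every t > 0, then X = Y. -/
open scoped ENNReal Classical

/-- A diagram in the class `B̄`: a countable multiset of points in the closed half-plane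
`{(b, d) : b ≤ d}` (represented as an `ℕ`-indexed family; points on the diagonal, of which
countably many copies are freely available for matching, are allowed and serve to pad
finite diagrams), such that for every `ε > 0` only finitely many points lie at distance
greater than `ε` from the diagonal `Δ`. -/
structure BarB where
  pts : ℕ → ℝ × ℝ
  birth_le_death : ∀ n, (pts n).1 ≤ (pts n).2
  finitePers : ∀ ε : ℝ, 0 < ε → {n | ε < dist (pts n) (diagProj (pts n))}.Finite

/-- The domain `X₀ ⊔ Y₀'` of a matching between diagrams `X, Y ∈ B̄`. -/
noncomputable def matchDom (X Y : BarB) : ℕ ⊕ ℕ → ℝ × ℝ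
  | Sum.inl n => X.pts n
  | Sum.inr n => diagProj (Y.pts n)

/-- The codomain `Y₀ ⊔ X₀'` of a matching between diagrams `X, Y ∈ B̄`. -/
noncomputable def matchCod (X Y : BarB) : ℕ ⊕ ℕ → ℝ × ℝ
  | Sum.inl n => Y.pts n
  | Sum.inr n => diagProj (X.pts n)

/-- The bottleneck profile `D_{X,Y}(t) = inf_η |{u : d(u, η u) > t}|` for diagrams in `B̄`;
matchings are bijections `η : X₀ ⊔ Y₀' → Y₀ ⊔ X₀'`. -/
noncomputable def bprofileB (X Y : BarB) (t : ℝ) : ℝ≥0∞ :=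
  ⨅ e : ℕ ⊕ ℕ ≃ ℕ ⊕ ℕ,
    ({i | t < pairCost (matchDom X Y i) (matchCod X Y (e i))}.encard : ℝ≥0∞)

/-- The `f`-Prokhorov distance `π_f(X,Y) = inf {t > 0 : D_{X,Y}(t) < f(t)}` on `B̄`. -/
noncomputable def prokhorovB (f : ℝ → ℝ) (X Y : BarB) : ℝ≥0∞ :=
  ⨅ t : {t : ℝ // 0 < t ∧ bprofileB X Y t < ENNReal.ofReal (f t)}, ENNReal.ofReal t.1

/-- The indices of the off-diagonal points of a diagram in `B̄`. -/
def BarB.offDiag (X : BarB) : Set ℕ := {n | (X.pts n).1 < (X.pts n).2}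

/-- Equality of diagrams in `B̄` as multisets of off-diagonal points: there is a bijection
between the off-diagonal points of `X` and those of `Y` matching equal points. -/
def BarB.MEquiv (X Y : BarB) : Prop :=
  ∃ σ : X.offDiag ≃ Y.offDiag, ∀ n : X.offDiag, Y.pts (σ n : ℕ) = X.pts (n : ℕ)

/-- The `p`-Wasserstein distance `W_p(X,Y) = inf_η (Σ_u d(u, η u)^p)^(1/p)` on `B̄`. -/
noncomputable def wassersteinB (p : ℝ) (X Y : BarB) : ℝ≥0∞ :=
  ⨅ e : ℕ ⊕ ℕ ≃ ℕ ⊕ ℕ,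
    (∑' i, ENNReal.ofReal (pairCost (matchDom X Y i) (matchCod X Y (e i)) ^ p)) ^ (1 / p)

/-- The empty persistence diagram, viewed in `B̄` (only diagonal padding points). -/
noncomputable def emptyB : BarB where
  pts _ := (0, 0)
  birth_le_death _ := le_refl 0
  finitePers ε hε := by
    have : {n : ℕ | ε < dist ((0 : ℝ), (0 : ℝ)) (diagProj (0, 0))} = ∅ := by
      ext n
      simp [diagProj]
      linarith
    simp only [this]
    exact Set.finite_empty

lemma diag_dist (z w : ℝ × ℝ) (hw : w.1 = w.2) : (z.2 - z.1) / 2 ≤ dist z w := by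
  have h1 : |z.1 - w.1| ≤ dist z w := by
    rw [Prod.dist_eq, Real.dist_eq]; exact le_max_left _ _
  have h2 : |z.2 - w.1| ≤ dist z w := by
    rw [Prod.dist_eq, Real.dist_eq, hw]; exact le_max_right _ _
  have a1 := le_abs_self (z.2 - w.1)
  have a2 := neg_abs_le (z.1 - w.1)
  linarith

lemma pairCost_self (x : ℝ × ℝ) : pairCost x x = 0 := by
  rw [pairCost]; split <;> simp

lemma sep (Z : BarB) (z : ℝ × ℝ) (hz : z.1 < z.2) :
    ∃ t : ℝ, 0 < t ∧ t < (z.2 - z.1) / 4 ∧ ∀ m, dist (Z.pts m) z ≤ t → Z.pts m = z := by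
  have hδ : 0 < (z.2 - z.1) / 4 := by linarith
  have hF := Z.finitePers ((z.2 - z.1) / 4) hδ
  classical
  set T : Finset ℕ := hF.toFinset.filter (fun m => Z.pts m ≠ z) with hT
  set s : Finset ℝ := insert ((z.2 - z.1) / 8) (T.image fun m => dist (Z.pts m) z / 2) with hs
  have hsne : s.Nonempty := ⟨_, Finset.mem_insert_self _ _⟩
  refine ⟨s.min' hsne, ?_, ?_, ?_⟩
  · have hmem := s.min'_mem hsne
    rcases Finset.mem_insert.mp hmem with h | h
    · rw [h]; linarith
    · rcases Finset.mem_image.mp h with ⟨m, hm, hme⟩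
      have hne : Z.pts m ≠ z := (Finset.mem_filter.mp hm).2
      have : 0 < dist (Z.pts m) z := dist_pos.mpr hne
      rw [← hme]; linarith
  · have h8 : ((z.2 - z.1) / 8 : ℝ) ∈ s := Finset.mem_insert_self _ _
    have := s.min'_le _ h8
    linarith
  · intro m hm
    by_contra hne
    have hdpos : 0 < dist (Z.pts m) z := dist_pos.mpr hne
    have hmin8 : s.min' hsne ≤ (z.2 - z.1) / 8 := s.min'_le _ (Finset.mem_insert_self _ _)
    have hmF : m ∈ hF.toFinset := by
      rw [Set.Finite.mem_toFinset]
      show (z.2 - z.1) / 4 < dist (Z.pts m) (diagProj (Z.pts m))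
      have h1 : (z.2 - z.1) / 2 ≤ dist z (diagProj (Z.pts m)) := diag_dist z _ rfl
      have h2 := dist_triangle z (Z.pts m) (diagProj (Z.pts m))
      have h3 : dist z (Z.pts m) ≤ (z.2 - z.1) / 8 := by
        rw [dist_comm]; exact le_trans hm hmin8
      linarith
    have hmT : m ∈ T := Finset.mem_filter.mpr ⟨hmF, hne⟩
    have hms : dist (Z.pts m) z / 2 ∈ s :=
      Finset.mem_insert_of_mem (Finset.mem_image_of_mem _ hmT)
    have := s.min'_le _ hms
    linarith

lemma extract (X Y : BarB) (t : ℝ) (h : bprofileB X Y t = 0) :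
    ∃ e : ℕ ⊕ ℕ ≃ ℕ ⊕ ℕ, ∀ i, pairCost (matchDom X Y i) (matchCod X Y (e i)) ≤ t := by
  have h1 : bprofileB X Y t < 1 := by rw [h]; exact zero_lt_one
  rw [bprofileB, iInf_lt_iff] at h1
  obtain ⟨e, he⟩ := h1
  refine ⟨e, fun i => ?_⟩
  by_contra hc
  push_neg at hc
  have h2 : (1 : ℕ∞) ≤ {i | t < pairCost (matchDom X Y i) (matchCod X Y (e i))}.encard :=
    Set.one_le_encard_iff_nonempty.mpr ⟨i, hc⟩
  have h3 : (1 : ℝ≥0∞) ≤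
      ({i | t < pairCost (matchDom X Y i) (matchCod X Y (e i))}.encard : ℝ≥0∞) := by
    exact_mod_cast h2
  exact absurd he (not_lt.mpr h3)

lemma fiber_equiv (X Y : BarB) (H : ∀ t : ℝ, 0 < t → bprofileB X Y t = 0)
    (z : ℝ × ℝ) (hz : z.1 < z.2) :
    Nonempty ({n | X.pts n = z} ≃ {n | Y.pts n = z}) := by
  obtain ⟨tX, htX0, htX4, hsX⟩ := sep X z hz
  obtain ⟨tY, htY0, htY4, hsY⟩ := sep Y z hz
  set t := min tX tY with ht
  have ht0 : 0 < t := lt_min htX0 htY0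
  obtain ⟨e, he⟩ := extract X Y t (H t ht0)
  have hδ : t < (z.2 - z.1) / 2 := by
    have := min_le_left tX tY; linarith
  have hzd : ¬ z.1 = z.2 := ne_of_lt hz
  have fwd : ∀ n, X.pts n = z → ∃ m, e (Sum.inl n) = Sum.inl m ∧ Y.pts m = z := by
    intro n hn
    have hc := he (Sum.inl n)
    cases hem : e (Sum.inl n) with
    | inl m =>
        refine ⟨m, rfl, ?_⟩
        rw [hem] at hc
        simp only [matchDom, matchCod] at hc
        rw [hn, pairCost, if_neg (fun h => hzd h.1)] at hc
        apply hsY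
        rw [dist_comm]
        exact le_trans hc (min_le_right _ _)
    | inr m =>
        exfalso
        rw [hem] at hc
        simp only [matchDom, matchCod] at hc
        rw [hn, pairCost, if_neg (fun h => hzd h.1)] at hc
        have := diag_dist z (diagProj (X.pts m)) rfl
        linarith
  have bwd : ∀ m, Y.pts m = z → ∃ n, e (Sum.inl n) = Sum.inl m ∧ X.pts n = z := by
    intro m hm
    have hc := he (e.symm (Sum.inl m))
    rw [Equiv.apply_symm_apply] at hc
    cases hem : e.symm (Sum.inl m) with
    | inl n =>
        refine ⟨n, by rw [← hem, Equiv.apply_symm_apply], ?_⟩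
        rw [hem] at hc
        simp only [matchDom, matchCod] at hc
        rw [hm, pairCost, if_neg (fun h => hzd h.2)] at hc
        exact hsX _ (le_trans hc (min_le_left _ _))
    | inr n =>
        exfalso
        rw [hem] at hc
        simp only [matchDom, matchCod] at hc
        rw [hm, pairCost, if_neg (fun h => hzd h.2)] at hc
        have h1 := diag_dist z (diagProj (Y.pts n)) rfl
        rw [dist_comm] at hc
        linarith
  classical
  choose u hu1 hu2 using fwd
  choose v hv1 hv2 using bwd
  have hui : Function.Injective
      (fun p : {n | X.pts n = z} => (⟨u p p.2, hu2 p p.2⟩ : {n | Y.pts n = z})) := by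
    intro p q hpq
    have huv : u p p.2 = u q q.2 := congrArg Subtype.val hpq
    have h1 : e (Sum.inl (p : ℕ)) = e (Sum.inl (q : ℕ)) := by
      rw [hu1 p p.2, hu1 q q.2, huv]
    exact Subtype.ext (Sum.inl.inj (e.injective h1))
  have hvi : Function.Injective
      (fun m : {n | Y.pts n = z} => (⟨v m m.2, hv2 m m.2⟩ : {n | X.pts n = z})) := by
    intro p q hpq
    have hvv : v p p.2 = v q q.2 := congrArg Subtype.val hpq
    have h1 : Sum.inl (α := ℕ) (β := ℕ) (p : ℕ) = Sum.inl (q : ℕ) := by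
      rw [← hv1 p p.2, ← hv1 q q.2, hvv]
    exact Subtype.ext (Sum.inl.inj h1)
  obtain ⟨h, hb⟩ := Function.Embedding.schroeder_bernstein hui hvi
  exact ⟨Equiv.ofBijective h hb⟩

/-- `D_{X,X}(t) = 0` for every persistence diagram `X` and every `t > 0`; moreover, if
`X, Y ∈ B̄` satisfy `D_{X,Y}(t) = 0` for every `t > 0`, then `X = Y` (as multisets of
off-diagonal points). -/
theorem bprofile_self_eq_zero_and_definite :
    (∀ X : PD, ∀ t : ℝ, 0 < t → bprofile X X t = 0) ∧
    (∀ X Y : BarB, (∀ t : ℝ, 0 < t → bprofileB X Y t = 0) → BarB.MEquiv X Y) := by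
  constructor
  · intro X t ht
    classical
    set P : Multiset ((ℝ × ℝ) × (ℝ × ℝ)) :=
      (X.pts.map fun x => (x, x)) + ((X.pts.map diagProj).map fun x => (x, x)) with hPdef
    have hP : IsMatching X X P := by
      constructor <;>
        simp [hPdef, Multiset.map_map, Function.comp_def]
    have hcount : Multiset.countP (fun uv => t < pairCost uv.1 uv.2) P = 0 := by
      rw [Multiset.countP_eq_zero]
      intro a ha
      rw [hPdef] at ha
      simp only [Multiset.mem_add, Multiset.mem_map] at ha
      have hself : ∃ x, a = (x, x) := by
        rcases ha with ⟨x, _, rfl⟩ | ⟨x, _, rfl⟩ <;> exact ⟨x, rfl⟩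
      obtain ⟨x, rfl⟩ := hself
      simp only [pairCost_self]
      exact fun h => absurd ht (by simpa using not_lt.mpr h.le)
    refine le_antisymm ?_ zero_le
    refine le_trans (iInf_le _ ⟨P, hP⟩) ?_
    rw [hcount]
    simp
  · intro X Y H
    classical
    have g : ∀ z : ℝ × ℝ, z.1 < z.2 → ({n | X.pts n = z} ≃ {n | Y.pts n = z}) :=
      fun z hz => (fiber_equiv X Y H z hz).some
    let F : X.offDiag → Y.offDiag := fun p =>
      ⟨(g (X.pts ↑p) p.2 ⟨↑p, rfl⟩ : ℕ), by
        have h2 := (g (X.pts ↑p) p.2 ⟨↑p, rfl⟩).2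
        show (Y.pts _).1 < (Y.pts _).2
        rw [h2]; exact p.2⟩
    have hF : ∀ (z : ℝ × ℝ) (hz : z.1 < z.2) (n : ℕ) (hnz : X.pts n = z)
        (hn : n ∈ X.offDiag), (F ⟨n, hn⟩ : ℕ) = ((g z hz ⟨n, hnz⟩ : ℕ)) := by
      intro z hz n hnz hn
      subst hnz
      rfl
    have hFval : ∀ p : X.offDiag, Y.pts (F p : ℕ) = X.pts (p : ℕ) := by
      intro p
      exact (g (X.pts ↑p) p.2 ⟨↑p, rfl⟩).2
    have hinj : Function.Injective F := by
      intro p q hpq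
      have hv : (F p : ℕ) = (F q : ℕ) := congrArg Subtype.val hpq
      have hzz : X.pts (q : ℕ) = X.pts (p : ℕ) := by
        rw [← hFval p, ← hFval q, hv]
      have h1 : (F p : ℕ) = ((g (X.pts ↑p) p.2 ⟨↑p, rfl⟩ : ℕ)) := hF _ p.2 _ rfl p.2
      have h2 : (F q : ℕ) = ((g (X.pts ↑p) p.2 ⟨↑q, hzz⟩ : ℕ)) := hF _ p.2 _ hzz q.2
      have h3 : (g (X.pts ↑p) p.2 ⟨↑p, rfl⟩) = (g (X.pts ↑p) p.2 ⟨↑q, hzz⟩) :=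
        Subtype.ext (by rw [← h1, ← h2, hv])
      have h4 := (g (X.pts ↑p) p.2).injective h3
      have h5 : (p : ℕ) = (q : ℕ) := Subtype.mk_eq_mk.mp h4
      exact Subtype.ext h5
    have hsurj : Function.Surjective F := by
      intro m
      have hz : (Y.pts (m : ℕ)).1 < (Y.pts (m : ℕ)).2 := m.2
      set x := (g (Y.pts ↑m) hz).symm ⟨↑m, rfl⟩ with hx
      have hnz : X.pts (x : ℕ) = Y.pts (m : ℕ) := x.2
      have hn : (x : ℕ) ∈ X.offDiag := by
        show (X.pts _).1 < (X.pts _).2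
        rw [hnz]; exact hz
      refine ⟨⟨x, hn⟩, ?_⟩
      apply Subtype.ext
      have h1 : (F ⟨x, hn⟩ : ℕ) = ((g (Y.pts ↑m) hz ⟨↑x, hnz⟩ : ℕ)) := hF _ hz _ hnz hn
      have h2 : (⟨(x : ℕ), hnz⟩ : {n | X.pts n = Y.pts ↑m}) = x := Subtype.ext rfl
      rw [h1, h2, hx, Equiv.apply_symm_apply]
    exact ⟨Equiv.ofBijective F ⟨hinj, hsurj⟩, hFval⟩
end

section
/- Let f : [0,∞) → [0,∞) be monotonically increasing with lim_{t→0⁺} f(t) = 0. For X, Y ∈ B̄, if π_f(X,Y) = 0 then X = Y. -/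
open scoped ENNReal Classical

section Aux

lemma fst_abs_le_dist (u v : ℝ × ℝ) : |u.1 - v.1| ≤ dist u v := by
  rw [Prod.dist_eq, Real.dist_eq, Real.dist_eq]; exact le_max_left _ _

lemma snd_abs_le_dist (u v : ℝ × ℝ) : |u.2 - v.2| ≤ dist u v := by
  rw [Prod.dist_eq, Real.dist_eq, Real.dist_eq]; exact le_max_right _ _

lemma pers_le_dist_diag (u v : ℝ × ℝ) (hv : v.1 = v.2) :
    (u.2 - u.1) / 2 ≤ dist u v := by
  have h1 := abs_le.mp (fst_abs_le_dist u v)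
  have h2 := abs_le.mp (snd_abs_le_dist u v)
  linarith [h1.1, h1.2, h2.1, h2.2]

lemma pers_lower (u v : ℝ × ℝ) :
    (u.2 - u.1) / 2 - dist u v ≤ (v.2 - v.1) / 2 := by
  have h1 := abs_le.mp (fst_abs_le_dist u v)
  have h2 := abs_le.mp (snd_abs_le_dist u v)
  linarith [h1.1, h1.2, h2.1, h2.2]

lemma dist_diagProj_eq (u : ℝ × ℝ) (h : u.1 ≤ u.2) :
    dist u (diagProj u) = (u.2 - u.1) / 2 := by
  simp only [diagProj, Prod.dist_eq, Real.dist_eq]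
  rw [abs_of_nonpos (by linarith), abs_of_nonneg (by linarith)]
  rw [max_eq_right (by linarith)]
  ring

lemma pairCost_comm (u v : ℝ × ℝ) : pairCost u v = pairCost v u := by
  unfold pairCost
  rw [dist_comm]
  by_cases h : u.1 = u.2 ∧ v.1 = v.2
  · rw [if_pos h, if_pos ⟨h.2, h.1⟩]
  · rw [if_neg h, if_neg (fun h' => h ⟨h'.2, h'.1⟩)]

lemma pairCost_offdiag (u v : ℝ × ℝ) (hu : u.1 ≠ u.2) : pairCost u v = dist u v := by
  unfold pairCost
  rw [if_neg (fun h' => hu h'.1)]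

lemma matchDom_swap (X Y : BarB) (i : ℕ ⊕ ℕ) : matchDom Y X i = matchCod X Y i := by
  cases i <;> rfl

lemma matchCod_swap (X Y : BarB) (i : ℕ ⊕ ℕ) : matchCod Y X i = matchDom X Y i := by
  cases i <;> rfl

/-- Extraction: π_f = 0 gives matchings with all costs ≤ ε. -/
lemma exists_small_matching (f : ℝ → ℝ)
    (hf_lim : Filter.Tendsto f (nhdsWithin 0 (Set.Ioi 0)) (nhds 0))
    (X Y : BarB) (h : prokhorovB f X Y = 0) (ε : ℝ) (hε : 0 < ε) :
    ∃ e : ℕ ⊕ ℕ ≃ ℕ ⊕ ℕ, ∀ i, pairCost (matchDom X Y i) (matchCod X Y (e i)) ≤ ε := by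
  have h1 : f ⁻¹' Set.Iio 1 ∈ nhdsWithin 0 (Set.Ioi 0) := hf_lim (Iio_mem_nhds one_pos)
  rw [Metric.mem_nhdsWithin_iff] at h1
  obtain ⟨ε₁, hε₁, hsub⟩ := h1
  set ε' : ℝ := min ε ε₁ with hε'def
  have hε' : 0 < ε' := lt_min hε hε₁
  have h2 : prokhorovB f X Y < ENNReal.ofReal ε' := by
    rw [h]; exact ENNReal.ofReal_pos.mpr hε'
  rw [prokhorovB] at h2
  obtain ⟨⟨t, ht0, htp⟩, hlt⟩ := iInf_lt_iff.mp h2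
  have htε' : t < ε' := (ENNReal.ofReal_lt_ofReal_iff hε').mp hlt
  have hft : f t < 1 := hsub ⟨by
    simpa [Real.dist_eq, abs_of_pos ht0] using lt_of_lt_of_le htε' (min_le_right _ _), ht0⟩
  have h3 : bprofileB X Y t < 1 := by
    refine lt_of_lt_of_le htp ?_
    exact ENNReal.ofReal_le_one.mpr hft.le
  rw [bprofileB] at h3
  obtain ⟨e, he⟩ := iInf_lt_iff.mp h3
  refine ⟨e, fun i => ?_⟩
  have hcard : {i | t < pairCost (matchDom X Y i) (matchCod X Y (e i))}.encard = 0 := by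
    by_contra hne
    have h1le : (1 : ℕ∞) ≤ _ := ENat.one_le_iff_ne_zero.mpr hne
    have : (1 : ℝ≥0∞) ≤
        ({i | t < pairCost (matchDom X Y i) (matchCod X Y (e i))}.encard : ℝ≥0∞) := by
      exact_mod_cast ENat.toENNReal_le.mpr h1le
    exact absurd he (not_lt.mpr this)
  have hempty := Set.encard_eq_zero.mp hcard
  have hni : i ∉ ({i | t < pairCost (matchDom X Y i) (matchCod X Y (e i))} : Set (ℕ ⊕ ℕ)) := by
    rw [hempty]; exact Set.notMem_empty i
  have : ¬ t < pairCost (matchDom X Y i) (matchCod X Y (e i)) := hni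
  linarith [not_lt.mp this, htε'.le.trans (min_le_left ε ε₁)]

lemma fiber_finite (X : BarB) (p : ℝ × ℝ) (hp : p.1 < p.2) :
    {n | X.pts n = p}.Finite := by
  refine (X.finitePers ((p.2 - p.1) / 4) (by linarith)).subset fun n hn => ?_
  have : X.pts n = p := hn
  rw [Set.mem_setOf_eq, this, dist_diagProj_eq p hp.le]
  linarith

lemma ncard_fiber_le (X Y : BarB)
    (hm : ∀ ε : ℝ, 0 < ε → ∃ e : ℕ ⊕ ℕ ≃ ℕ ⊕ ℕ,
      ∀ i, pairCost (matchDom X Y i) (matchCod X Y (e i)) ≤ ε)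
    (p : ℝ × ℝ) (hp : p.1 < p.2) :
    {n | X.pts n = p}.ncard ≤ {n | Y.pts n = p}.ncard := by
  set δ : ℝ := (p.2 - p.1) / 2 with hδdef
  have hδ : 0 < δ := by rw [hδdef]; linarith
  set F : Set ℕ := {m | δ / 2 < dist (Y.pts m) (diagProj (Y.pts m))} with hFdef
  have hF : F.Finite := Y.finitePers _ (by linarith)
  set S : Set ℕ := {n | X.pts n = p} with hSdef
  set T : Set ℕ := {m | Y.pts m = p} with hTdef
  have hT : T.Finite := fiber_finite Y p hp
  have hTsub : T ⊆ F := by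
    intro m hm'
    have : Y.pts m = p := hm'
    rw [Set.mem_setOf_eq, this, dist_diagProj_eq p hp.le]
    rw [hδdef]; linarith
  -- choose ε
  have hFT : (F \ T).Finite := hF.diff
  set G : Finset ℝ := insert (δ / 2) (hFT.toFinset.image fun m => dist p (Y.pts m)) with hGdef
  have hGne : (δ / 2) ∈ G := Finset.mem_insert_self _ _
  set c : ℝ := G.min' ⟨_, hGne⟩ with hcdef
  have hc_mem : c ∈ G := Finset.min'_mem _ _
  have hc_pos : 0 < c := by
    rw [hGdef] at hc_mem
    rcases Finset.mem_insert.mp hc_mem with h' | h'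
    · rw [h']; linarith
    · obtain ⟨m, hmF, hmc⟩ := Finset.mem_image.mp h'
      rw [Set.Finite.mem_toFinset] at hmF
      have hne : Y.pts m ≠ p := fun hcontra => hmF.2 hcontra
      rw [← hmc]
      exact dist_pos.mpr (fun hcontra => hne hcontra.symm)
  have hc_le : c ≤ δ / 2 := Finset.min'_le _ _ hGne
  set ε : ℝ := c / 2 with hεdef
  have hε : 0 < ε := by rw [hεdef]; linarith
  obtain ⟨e, he⟩ := hm ε hε
  set φ : ℕ → ℕ := fun n => Sum.elim id id (e (Sum.inl n)) with hφdef
  have key : ∀ n ∈ S, e (Sum.inl n) = Sum.inl (φ n) ∧ φ n ∈ T := by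
    intro n hn
    have hXn : X.pts n = p := hn
    have hcost := he (Sum.inl n)
    have hdom : matchDom X Y (Sum.inl n) = p := by rw [matchDom, hXn]
    rw [hdom] at hcost
    rw [pairCost_offdiag p _ hp.ne] at hcost
    rcases hem : e (Sum.inl n) with m | m
    · rw [hem] at hcost
      have hdiag : (matchCod X Y (Sum.inl m)) = Y.pts m := rfl
      rw [hdiag] at hcost
      have hφm : φ n = m := by simp only [hφdef, hem]; rfl
      refine ⟨by rw [hφm], ?_⟩
      rw [hφm]
      -- show m ∈ T
      have hmF : m ∈ F := by
        have hpl := pers_lower p (Y.pts m)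
        rw [Set.mem_setOf_eq, dist_diagProj_eq (Y.pts m) (Y.birth_le_death m)]
        have : δ - dist p (Y.pts m) ≤ ((Y.pts m).2 - (Y.pts m).1) / 2 := by
          rw [hδdef]; linarith
        linarith
      by_contra hmT
      have hmFT : m ∈ F \ T := ⟨hmF, hmT⟩
      have : c ≤ dist p (Y.pts m) := by
        refine Finset.min'_le _ _ ?_
        rw [hGdef]
        refine Finset.mem_insert_of_mem (Finset.mem_image.mpr ⟨m, ?_, rfl⟩)
        rw [Set.Finite.mem_toFinset]; exact hmFT
      linarith
    · exfalso
      rw [hem] at hcost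
      have hdiag : (matchCod X Y (Sum.inr m)) = diagProj (X.pts m) := rfl
      rw [hdiag] at hcost
      have : δ ≤ dist p (diagProj (X.pts m)) := pers_le_dist_diag p _ rfl
      linarith
  refine Set.ncard_le_ncard_of_injOn φ (fun n hn => (key n hn).2) ?_ hT
  intro n1 h1 n2 h2 heq
  have k1 := (key n1 h1).1
  have k2 := (key n2 h2).1
  have : e (Sum.inl n1) = e (Sum.inl n2) := by rw [k1, k2, heq]
  exact Sum.inl.inj (e.injective this)

end Aux

/-- For monotonically increasing `f : [0,∞) → [0,∞)` with `lim_{t → 0⁺} f(t) = 0` and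
`X, Y ∈ B̄`, `π_f(X,Y) = 0` implies `X = Y` (as multisets of off-diagonal points). -/
theorem prokhorovB_eq_zero_implies_eq (f : ℝ → ℝ)
    (hf_nonneg : ∀ t, 0 ≤ t → 0 ≤ f t)
    (hf_mono : ∀ s t, 0 ≤ s → s ≤ t → f s ≤ f t)
    (hf_lim : Filter.Tendsto f (nhdsWithin 0 (Set.Ioi 0)) (nhds 0))
    (X Y : BarB) (h : prokhorovB f X Y = 0) :
    BarB.MEquiv X Y := by
  have hm : ∀ ε : ℝ, 0 < ε → ∃ e : ℕ ⊕ ℕ ≃ ℕ ⊕ ℕ,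
      ∀ i, pairCost (matchDom X Y i) (matchCod X Y (e i)) ≤ ε :=
    fun ε hε => exists_small_matching f hf_lim X Y h ε hε
  have hm' : ∀ ε : ℝ, 0 < ε → ∃ e : ℕ ⊕ ℕ ≃ ℕ ⊕ ℕ,
      ∀ i, pairCost (matchDom Y X i) (matchCod Y X (e i)) ≤ ε := by
    intro ε hε
    obtain ⟨e, he⟩ := hm ε hε
    refine ⟨e.symm, fun i => ?_⟩
    rw [matchDom_swap, matchCod_swap, pairCost_comm]
    have := he (e.symm i)
    rwa [e.apply_symm_apply] at this
  have key : ∀ p : ℝ × ℝ, p.1 < p.2 →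
      {n | X.pts n = p}.ncard = {n | Y.pts n = p}.ncard :=
    fun p hp => le_antisymm (ncard_fiber_le X Y hm p hp) (ncard_fiber_le Y X hm' p hp)
  have E : ∀ p : ℝ × ℝ, Nonempty
      ({a : X.offDiag // X.pts ↑a = p} ≃ {b : Y.offDiag // Y.pts ↑b = p}) := by
    intro p
    by_cases hp : p.1 < p.2
    · have eX : {a : X.offDiag // X.pts ↑a = p} ≃ {n : ℕ | X.pts n = p} :=
        { toFun := fun a => ⟨a.1.1, a.2⟩
          invFun := fun n =>
            ⟨⟨n.1, show (X.pts n.1).1 < (X.pts n.1).2 by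
              have : X.pts n.1 = p := n.2
              rw [this]; exact hp⟩, n.2⟩
          left_inv := fun a => rfl
          right_inv := fun n => rfl }
      have eY : {b : Y.offDiag // Y.pts ↑b = p} ≃ {n : ℕ | Y.pts n = p} :=
        { toFun := fun a => ⟨a.1.1, a.2⟩
          invFun := fun n =>
            ⟨⟨n.1, show (Y.pts n.1).1 < (Y.pts n.1).2 by
              have : Y.pts n.1 = p := n.2
              rw [this]; exact hp⟩, n.2⟩
          left_inv := fun a => rfl
          right_inv := fun n => rfl }
      haveI fX : Finite {n : ℕ | X.pts n = p} := (fiber_finite X p hp).to_subtype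
      haveI fY : Finite {n : ℕ | Y.pts n = p} := (fiber_finite Y p hp).to_subtype
      haveI : Finite {a : X.offDiag // X.pts ↑a = p} := Finite.of_equiv _ eX.symm
      haveI : Finite {b : Y.offDiag // Y.pts ↑b = p} := Finite.of_equiv _ eY.symm
      haveI := Fintype.ofFinite {a : X.offDiag // X.pts ↑a = p}
      haveI := Fintype.ofFinite {b : Y.offDiag // Y.pts ↑b = p}
      refine ⟨Fintype.equivOfCardEq ?_⟩
      rw [← Nat.card_eq_fintype_card, ← Nat.card_eq_fintype_card]
      rw [Nat.card_congr eX, Nat.card_congr eY]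
      rw [Nat.card_coe_set_eq, Nat.card_coe_set_eq]
      exact key p hp
    · haveI hX : IsEmpty {a : X.offDiag // X.pts ↑a = p} :=
        ⟨fun a => hp (a.2 ▸ a.1.2)⟩
      haveI hY : IsEmpty {b : Y.offDiag // Y.pts ↑b = p} :=
        ⟨fun b => hp (b.2 ▸ b.1.2)⟩
      exact ⟨Equiv.equivOfIsEmpty _ _⟩
  exact ⟨Equiv.ofFiberEquiv (f := fun a : X.offDiag => X.pts ↑a)
      (g := fun b : Y.offDiag => Y.pts ↑b) (fun p => (E p).some),
    fun n => Equiv.ofFiberEquiv_map (fun p => (E p).some) n⟩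
end

section
/- Fix two persistence diagrams X, Y. Let f : [0,∞) → [0,∞) be superadditive with lim_{t→0⁺} f(t) = 0 and f(t) > 0 for all t > 0. Then for every ε > 0 there exists δ > 0 such that for every monotonically increasing g : [0,∞) → [0,∞) with ‖f − g‖_∞ < δ one has |π_f(X,Y) − π_g(X,Y)| < ε. -/
open scoped ENNReal Classical

/-- The `f`-Prokhorov distance `π_f(X,Y) = inf {t > 0 : D_{X,Y}(t) < f(t)}`
(with value `∞` if no such `t` exists). -/
noncomputable def prokhorov (f : ℝ → ℝ) (X Y : PD) : ℝ≥0∞ :=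
  ⨅ t : {t : ℝ // 0 < t ∧ bprofile X Y t < ENNReal.ofReal (f t)}, ENNReal.ofReal t.1

/-- The canonical matching sending every point to its diagonal projection. -/
noncomputable def canonMatch (X Y : PD) : Multiset ((ℝ × ℝ) × (ℝ × ℝ)) :=
  X.pts.map (fun x => (x, diagProj x)) + Y.pts.map (fun y => (diagProj y, y))

lemma canonMatch_isMatching (X Y : PD) : IsMatching X Y (canonMatch X Y) := by
  constructor
  · simp [canonMatch, Multiset.map_map, Function.comp]
  · simp [canonMatch, Multiset.map_map, Function.comp, add_comm]

lemma bprofile_anti (X Y : PD) {s t : ℝ} (h : s ≤ t) : bprofile X Y t ≤ bprofile X Y s := by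
  refine le_iInf fun P => iInf_le_of_le P ?_
  have : Multiset.countP (fun uv : (ℝ × ℝ) × (ℝ × ℝ) => t < pairCost uv.1 uv.2) P.1 ≤
      Multiset.countP (fun uv : (ℝ × ℝ) × (ℝ × ℝ) => s < pairCost uv.1 uv.2) P.1 := by
    rw [Multiset.countP_eq_card_filter, Multiset.countP_eq_card_filter]
    exact Multiset.card_le_card
      (Multiset.monotone_filter_right _ (fun uv h' => lt_of_le_of_lt h h'))
  exact_mod_cast this

lemma bprofile_eventually_zero (X Y : PD) :
    ∃ t0 : ℝ, 0 < t0 ∧ ∀ t, t0 ≤ t → bprofile X Y t = 0 := by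
  set P0 := canonMatch X Y with hP0
  set L := (P0.map (fun uv => pairCost uv.1 uv.2)).sum with hLdef
  have hmem : ∀ uv ∈ P0, pairCost uv.1 uv.2 ≤ L := by
    intro uv huv
    exact Multiset.single_le_sum
      (by rintro x hx; obtain ⟨uv', _, rfl⟩ := Multiset.mem_map.mp hx
          exact pairCost_nonneg _ _) _ (Multiset.mem_map_of_mem _ huv)
  refine ⟨max L 1, lt_of_lt_of_le one_pos (le_max_right _ _), fun t ht => ?_⟩
  have hLt : L ≤ t := le_trans (le_max_left _ _) ht
  have hc : Multiset.countP (fun uv : (ℝ × ℝ) × (ℝ × ℝ) => t < pairCost uv.1 uv.2) P0 = 0 :=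
    Multiset.countP_eq_zero.mpr fun uv huv =>
      not_lt.mpr (le_trans (hmem uv huv) hLt)
  have h1 : bprofile X Y t ≤ 0 := by
    refine le_trans (iInf_le _ ⟨P0, canonMatch_isMatching X Y⟩) ?_
    simp [hc]
  exact le_antisymm h1 (zero_le)

lemma prokhorov_le_shift (X Y : PD) (h1 h2 : ℝ → ℝ) (c : ℝ) (hc : 0 < c)
    (hcomp : ∀ t, 0 < t → h1 t ≤ h2 (t + c)) :
    prokhorov h2 X Y ≤ prokhorov h1 X Y + ENNReal.ofReal c := by
  conv_rhs => rw [prokhorov]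
  rw [ENNReal.iInf_add]
  refine le_iInf ?_
  rintro ⟨t, ht, hb⟩
  have h1' : (0:ℝ) < t + c := by linarith
  have hb' : bprofile X Y (t + c) < ENNReal.ofReal (h2 (t + c)) :=
    lt_of_le_of_lt (bprofile_anti X Y (by linarith))
      (lt_of_lt_of_le hb (ENNReal.ofReal_le_ofReal (hcomp t ht)))
  calc prokhorov h2 X Y ≤ ENNReal.ofReal (t + c) := iInf_le (fun t : {t : ℝ // 0 < t ∧ bprofile X Y t < ENNReal.ofReal (h2 t)} => ENNReal.ofReal t.1) ⟨t + c, h1', hb'⟩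
    _ = ENNReal.ofReal t + ENNReal.ofReal c := ENNReal.ofReal_add ht.le hc.le

/-- Continuity in `f` of the `f`-Prokhorov distance for fixed diagrams `X, Y`: for
superadditive `f : [0,∞) → [0,∞)` with `lim_{t → 0⁺} f(t) = 0` and `f(t) > 0` for `t > 0`,
for every `ε > 0` there is `δ > 0` such that every monotonically increasing
`g : [0,∞) → [0,∞)` with `‖f - g‖_∞ < δ` satisfies `|π_f(X,Y) - π_g(X,Y)| < ε`. -/
theorem prokhorov_continuous_in_function (X Y : PD) (f : ℝ → ℝ)
    (hf_nonneg : ∀ t, 0 ≤ t → 0 ≤ f t)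
    (hf_superadd : ∀ s t, 0 ≤ s → 0 ≤ t → f s + f t ≤ f (s + t))
    (hf_lim : Filter.Tendsto f (nhdsWithin 0 (Set.Ioi 0)) (nhds 0))
    (hf_pos : ∀ t, 0 < t → 0 < f t) :
    ∀ ε : ℝ, 0 < ε → ∃ δ : ℝ, 0 < δ ∧ ∀ g : ℝ → ℝ,
      (∀ t, 0 ≤ t → 0 ≤ g t) → (∀ s t, 0 ≤ s → s ≤ t → g s ≤ g t) →
      (∀ t, 0 ≤ t → |f t - g t| < δ) →
      |(prokhorov f X Y).toReal - (prokhorov g X Y).toReal| < ε := by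
  intro ε hε
  have hε2 : (0:ℝ) < ε / 2 := by linarith
  refine ⟨f (ε / 2), hf_pos _ hε2, fun g hg_nonneg hg_mono hfg => ?_⟩
  set δ := f (ε / 2) with hδ
  -- shift f-admissibility to g-admissibility
  have hgle : prokhorov g X Y ≤ prokhorov f X Y + ENNReal.ofReal (ε / 2) := by
    refine prokhorov_le_shift X Y f g (ε / 2) hε2 fun t ht => ?_
    have h1 : f t + δ ≤ f (t + ε / 2) := hf_superadd t (ε / 2) ht.le hε2.le
    have h2 : |f (t + ε / 2) - g (t + ε / 2)| < δ := hfg _ (by linarith)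
    have := abs_lt.mp h2
    linarith [this.1]
  have hfle : prokhorov f X Y ≤ prokhorov g X Y + ENNReal.ofReal (ε / 2) := by
    refine prokhorov_le_shift X Y g f (ε / 2) hε2 fun t ht => ?_
    have h1 : f t + δ ≤ f (t + ε / 2) := hf_superadd t (ε / 2) ht.le hε2.le
    have h2 : |f t - g t| < δ := hfg _ ht.le
    have := abs_lt.mp h2
    linarith [this.2]
  -- finiteness
  obtain ⟨t0, ht0, hbz⟩ := bprofile_eventually_zero X Y
  have hffin : prokhorov f X Y < ⊤ := by
    refine lt_of_le_of_lt (iInf_le _ ⟨t0, ht0, ?_⟩) ENNReal.ofReal_lt_top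
    rw [hbz t0 le_rfl]
    exact ENNReal.ofReal_pos.mpr (hf_pos _ ht0)
  have hgfin : prokhorov g X Y < ⊤ :=
    lt_of_le_of_lt hgle (ENNReal.add_lt_top.mpr ⟨hffin, ENNReal.ofReal_lt_top⟩)
  have hfn : prokhorov f X Y ≠ ⊤ := hffin.ne
  have hgn : prokhorov g X Y ≠ ⊤ := hgfin.ne
  have h1 : (prokhorov g X Y).toReal ≤ (prokhorov f X Y).toReal + ε / 2 := by
    have := ENNReal.toReal_mono (a := prokhorov g X Y)
      (ENNReal.add_ne_top.mpr ⟨hfn, ENNReal.ofReal_ne_top⟩) hgle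
    rwa [ENNReal.toReal_add hfn ENNReal.ofReal_ne_top,
      ENNReal.toReal_ofReal hε2.le] at this
  have h2 : (prokhorov f X Y).toReal ≤ (prokhorov g X Y).toReal + ε / 2 := by
    have := ENNReal.toReal_mono (a := prokhorov f X Y)
      (ENNReal.add_ne_top.mpr ⟨hgn, ENNReal.ofReal_ne_top⟩) hfle
    rwa [ENNReal.toReal_add hgn ENNReal.ofReal_ne_top,
      ENNReal.toReal_ofReal hε2.le] at this
  rw [abs_sub_lt_iff]
  constructor <;> linarith
end

section
/- Let p ≥ 1, q > 0, c > 0 and f(t) = c·t^q. For any two persistence diagrams X, Y one has π_f(X,Y) ≤ W_p(X,Y)^{p/(p+q)} · c^{−1/(p+q)}. -/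
open scoped ENNReal Classical

/-- The `p`-Wasserstein distance `W_p(X,Y) = inf_η (Σ_u d(u, η u)^p)^(1/p)`. -/
noncomputable def wassersteinDist (p : ℝ) (X Y : PD) : ℝ :=
  sInf {r : ℝ | ∃ P, IsMatching X Y P ∧
    r = ((P.map fun uv => pairCost uv.1 uv.2 ^ p).sum) ^ (1 / p)}


lemma matching_exists (X Y : PD) : ∃ P, IsMatching X Y P := by
  refine ⟨X.pts.map (fun x => (x, diagProj x)) + Y.pts.map (fun y => (diagProj y, y)), ?_, ?_⟩ <;>
    simp [Multiset.map_map, Function.comp, add_comm]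

/-- For `p ≥ 1`, `q > 0`, `c > 0` and `f(t) = c·t^q`, one has
`π_f(X,Y) ≤ W_p(X,Y)^(p/(p+q)) · c^(-1/(p+q))`. -/
theorem prokhorov_le_wasserstein (p q c : ℝ) (hp : 1 ≤ p) (hq : 0 < q) (hc : 0 < c)
    (X Y : PD) :
    prokhorov (fun t => c * t ^ q) X Y
      ≤ ENNReal.ofReal (wassersteinDist p X Y ^ (p / (p + q)) * c ^ (-1 / (p + q))) := by
  have hp0 : 0 < p := lt_of_lt_of_le one_pos hp
  have hpq : 0 < p + q := by linarith
  set W := wassersteinDist p X Y with hWdef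
  -- the set defining W
  set S : Set ℝ := {r : ℝ | ∃ P, IsMatching X Y P ∧
    r = ((P.map fun uv => pairCost uv.1 uv.2 ^ p).sum) ^ (1 / p)} with hSdef
  have hSne : S.Nonempty := by
    obtain ⟨P, hP⟩ := matching_exists X Y
    exact ⟨_, P, hP, rfl⟩
  have hsum_nonneg : ∀ P : Multiset ((ℝ × ℝ) × (ℝ × ℝ)),
      0 ≤ ((P.map fun uv => pairCost uv.1 uv.2 ^ p).sum) := by
    intro P
    apply Multiset.sum_nonneg
    intro x hx
    obtain ⟨uv, _, rfl⟩ := Multiset.mem_map.1 hx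
    exact Real.rpow_nonneg (pairCost_nonneg _ _) p
  have hSbdd : BddBelow S := by
    refine ⟨0, fun r hr => ?_⟩
    obtain ⟨P, _, rfl⟩ := hr
    exact Real.rpow_nonneg (hsum_nonneg P) _
  have hW0 : 0 ≤ W := le_csInf hSne (fun r hr => by
    obtain ⟨P, _, rfl⟩ := hr
    exact Real.rpow_nonneg (hsum_nonneg P) _)
  set t₀ : ℝ := W ^ (p / (p + q)) * c ^ (-1 / (p + q)) with ht₀def
  have ht₀0 : 0 ≤ t₀ :=
    mul_nonneg (Real.rpow_nonneg hW0 _) (Real.rpow_nonneg hc.le _)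
  -- t₀ ^ (p+q) = W^p / c
  have ht₀pow : t₀ ^ (p + q) = W ^ p / c := by
    rw [ht₀def, Real.mul_rpow (Real.rpow_nonneg hW0 _) (Real.rpow_nonneg hc.le _)]
    rw [← Real.rpow_mul hW0, ← Real.rpow_mul hc.le]
    rw [div_mul_cancel₀ _ (ne_of_gt hpq)]
    rw [show -1 / (p + q) * (p + q) = -1 by field_simp]
    rw [Real.rpow_neg_one, div_eq_mul_inv]
  -- key: for any t > t₀ with t > 0, the bottleneck profile is < c * t ^ q
  have key : ∀ t : ℝ, 0 < t → t₀ < t →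
      bprofile X Y t < ENNReal.ofReal (c * t ^ q) := by
    intro t ht0 htt
    have hA : W ^ p < c * t ^ (p + q) := by
      have h1 : t₀ ^ (p + q) < t ^ (p + q) := Real.rpow_lt_rpow ht₀0 htt hpq
      have h2 : c * t₀ ^ (p + q) < c * t ^ (p + q) := by
        exact (mul_lt_mul_iff_right₀ hc).2 h1
      rwa [ht₀pow, mul_div_cancel₀ _ (ne_of_gt hc)] at h2
    have hApos : 0 < c * t ^ (p + q) := mul_pos hc (Real.rpow_pos_of_pos ht0 _)
    -- W < (c * t^(p+q)) ^ (1/p)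
    have hWlt : W < (c * t ^ (p + q)) ^ (1 / p) := by
      have : (W ^ p) ^ (1 / p) < (c * t ^ (p + q)) ^ (1 / p) :=
        Real.rpow_lt_rpow (Real.rpow_nonneg hW0 p) hA (by positivity)
      rwa [← Real.rpow_mul hW0, mul_one_div, div_self (ne_of_gt hp0), Real.rpow_one] at this
    obtain ⟨r, hrS, hrlt⟩ := (csInf_lt_iff hSbdd hSne).1 hWlt
    obtain ⟨P, hP, rfl⟩ := hrS
    set Sp : ℝ := ((P.map fun uv => pairCost uv.1 uv.2 ^ p).sum) with hSpdef
    have hSp0 : 0 ≤ Sp := hsum_nonneg P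
    have hSplt : Sp < c * t ^ (p + q) := by
      have h := Real.rpow_lt_rpow (Real.rpow_nonneg hSp0 _) hrlt hp0
      rwa [← Real.rpow_mul hSp0, one_div_mul_cancel (ne_of_gt hp0), Real.rpow_one,
        ← Real.rpow_mul hApos.le, one_div_mul_cancel (ne_of_gt hp0), Real.rpow_one] at h
    -- Markov bound: count * t^p ≤ Sp
    set n : ℕ := Multiset.countP (fun uv => t < pairCost uv.1 uv.2) P with hndef
    have hcount : (n : ℝ) * t ^ p ≤ Sp := by
      have hfilter : (n : ℝ) * t ^ p
          ≤ ((P.filter (fun uv => t < pairCost uv.1 uv.2)).map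
              fun uv => pairCost uv.1 uv.2 ^ p).sum := by
        rw [hndef, Multiset.countP_eq_card_filter]
        have := Multiset.card_nsmul_le_sum (s := (P.filter (fun uv => t < pairCost uv.1 uv.2)).map
            fun uv => pairCost uv.1 uv.2 ^ p) (a := t ^ p) ?_
        · simpa [nsmul_eq_mul, mul_comm] using this
        · intro x hx
          obtain ⟨uv, huv, rfl⟩ := Multiset.mem_map.1 hx
          have hmem := Multiset.of_mem_filter huv
          exact (Real.rpow_le_rpow ht0.le (le_of_lt hmem) hp0.le)
      refine hfilter.trans ?_
      have hsplit : P = P.filter (fun uv => t < pairCost uv.1 uv.2)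
          + P.filter (fun uv => ¬ t < pairCost uv.1 uv.2) := (Multiset.filter_add_not _ _).symm
      rw [hSpdef]
      conv_rhs => rw [hsplit]
      rw [Multiset.map_add, Multiset.sum_add]
      have : 0 ≤ ((P.filter (fun uv => ¬ t < pairCost uv.1 uv.2)).map
          fun uv => pairCost uv.1 uv.2 ^ p).sum := by
        apply Multiset.sum_nonneg
        intro x hx
        obtain ⟨uv, _, rfl⟩ := Multiset.mem_map.1 hx
        exact Real.rpow_nonneg (pairCost_nonneg _ _) p
      linarith
    have htp : 0 < t ^ p := Real.rpow_pos_of_pos ht0 p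
    have hnlt : (n : ℝ) < c * t ^ q := by
      have h1 : (n : ℝ) * t ^ p < c * t ^ (p + q) := lt_of_le_of_lt hcount hSplt
      have h2 : c * t ^ (p + q) = (c * t ^ q) * t ^ p := by
        rw [Real.rpow_add ht0]; ring
      rw [h2] at h1
      exact lt_of_mul_lt_mul_right h1 htp.le
    -- conclude on the bottleneck profile
    have : bprofile X Y t ≤ (n : ℝ≥0∞) := iInf_le _ (⟨P, hP⟩ :
      {P : Multiset ((ℝ × ℝ) × (ℝ × ℝ)) // IsMatching X Y P})
    refine lt_of_le_of_lt this ?_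
    rw [← ENNReal.ofReal_natCast n]
    exact (ENNReal.ofReal_lt_ofReal_iff (by positivity)).2 hnlt
  -- now conclude
  refine ENNReal.le_of_forall_pos_le_add (fun ε hε _ => ?_)
  have hεR : (0 : ℝ) < (ε : ℝ) := hε
  have hmem : 0 < t₀ + ε ∧ bprofile X Y (t₀ + ε)
      < ENNReal.ofReal ((fun t => c * t ^ q) (t₀ + ε)) := by
    refine ⟨by linarith, ?_⟩
    exact key _ (by linarith) (by linarith)
  have h1 : prokhorov (fun t => c * t ^ q) X Y ≤ ENNReal.ofReal (t₀ + ε) :=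
    iInf_le _ (⟨t₀ + ε, hmem⟩ :
      {t : ℝ // 0 < t ∧ bprofile X Y t < ENNReal.ofReal ((fun t => c * t ^ q) t)})
  refine h1.trans ?_
  rw [ENNReal.ofReal_add ht₀0 hεR.le]
  simp [ENNReal.ofReal_coe_nnreal]
end

section
/- Let p ≥ 1, q > 0, c > 0. The space of persistence diagrams in B̄ with finite p-th moment (i.e. those diagrams X with W_p(X, ∅) < ∞, where ∅ is the empty diagram), endowed with the (c·t^q)-Prokhorov distance π_{c t^q}, is separable: it contains a countable subset S such that every diagram in the space lies within π_{c t^q}-distance ε of some element of S, for every ε > 0. -/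
open scoped ENNReal Classical

/-! ### Auxiliary material for the separability proof -/

lemma pairCost_diag' {u v : ℝ × ℝ} (hu : u.1 = u.2) (hv : v.1 = v.2) :
    pairCost u v = 0 := if_pos ⟨hu, hv⟩

lemma pairCost_le_dist (u v : ℝ × ℝ) : pairCost u v ≤ dist u v := by
  unfold pairCost; split
  · exact dist_nonneg
  · exact le_rfl

lemma diagProj_fst_eq_snd (x : ℝ × ℝ) : (diagProj x).1 = (diagProj x).2 := rfl

lemma diagProj_of_diag {x : ℝ × ℝ} (h : x.1 = x.2) : diagProj x = x := by
  unfold diagProj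
  refine Prod.ext ?_ ?_ <;> simp <;> linarith

lemma ratApprox (x : ℝ × ℝ) (hx : x.1 ≤ x.2) {δ : ℝ} (hδ : 0 < δ) :
    ∃ ab : ℚ × ℚ, ((ab.1 : ℝ) ≤ (ab.2 : ℝ)) ∧
      dist (((ab.1 : ℝ)), ((ab.2 : ℝ))) x < δ := by
  obtain ⟨a, ha1, ha2⟩ := exists_rat_btwn (show x.1 - δ < x.1 by linarith)
  obtain ⟨b, hb1, hb2⟩ := exists_rat_btwn (show x.2 < x.2 + δ by linarith)
  refine ⟨(a, b), by dsimp; linarith, ?_⟩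
  rw [Prod.dist_eq]
  refine max_lt ?_ ?_ <;>
    · dsimp; rw [Real.dist_eq, abs_lt]; constructor <;> linarith

/-- Diagram in `B̄` built from a finite list of rational points. -/
noncomputable def mkQ (l : List (ℚ × ℚ)) : BarB where
  pts n := if ((l.getD n 0).1 : ℝ) ≤ ((l.getD n 0).2 : ℝ)
    then (((l.getD n 0).1 : ℝ), ((l.getD n 0).2 : ℝ)) else (0, 0)
  birth_le_death n := by
    split
    · assumption
    · exact le_refl (0 : ℝ)
  finitePers ε hε := by
    apply Set.Finite.subset (Set.finite_Iio l.length)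
    intro n hn
    by_contra h
    simp only [Set.mem_Iio, not_lt] at h
    have h0 : l.getD n 0 = 0 := List.getD_eq_default l 0 h
    have hpts : (if ((l.getD n 0).1 : ℝ) ≤ ((l.getD n 0).2 : ℝ)
        then (((l.getD n 0).1 : ℝ), ((l.getD n 0).2 : ℝ)) else ((0 : ℝ), (0 : ℝ))) = (0, 0) := by
      rw [h0]; norm_num
    simp only [Set.mem_setOf_eq, hpts] at hn
    rw [diagProj_of_diag rfl] at hn
    simp at hn
    linarith

lemma getD_map_range (h : ℕ → ℚ × ℚ) (M n : ℕ) :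
    ((List.range M).map h).getD n 0 = if n < M then h n else 0 := by
  by_cases hn : n < M
  · rw [if_pos hn, List.getD_eq_getElem _ _ (by simpa using hn)]
    simp
  · rw [if_neg hn, List.getD_eq_default _ _ (by simpa using not_lt.mp hn)]

lemma mkQ_pts_of_getD_zero {l : List (ℚ × ℚ)} {n : ℕ} (h0 : l.getD n 0 = 0) :
    (mkQ l).pts n = (0, 0) := by
  show (if ((l.getD n 0).1 : ℝ) ≤ ((l.getD n 0).2 : ℝ)
    then (((l.getD n 0).1 : ℝ), ((l.getD n 0).2 : ℝ)) else ((0 : ℝ), (0 : ℝ))) = (0, 0)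
  rw [h0]; norm_num

lemma mkQ_wasserstein_ne_top (p : ℝ) (hp : 1 ≤ p) (l : List (ℚ × ℚ)) :
    wassersteinB p (mkQ l) emptyB ≠ ⊤ := by
  have hp0 : p ≠ 0 := by linarith
  set f : ℕ ⊕ ℕ → ℝ≥0∞ := fun i =>
    ENNReal.ofReal (pairCost (matchDom (mkQ l) emptyB i)
      (matchCod (mkQ l) emptyB ((Equiv.refl (ℕ ⊕ ℕ)) i)) ^ p) with hf
  have h0 : ∀ i ∉ (Finset.range l.length).map ⟨Sum.inl, Sum.inl_injective⟩, f i = 0 := by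
    intro i hi
    cases i with
    | inl n =>
      have hn : l.length ≤ n := by
        simp only [Finset.mem_map, Finset.mem_range, Function.Embedding.coeFn_mk] at hi
        push_neg at hi
        by_contra hcon
        exact hi n (not_le.mp hcon) rfl
      have hpts : (mkQ l).pts n = (0, 0) :=
        mkQ_pts_of_getD_zero (List.getD_eq_default l 0 hn)
      have : pairCost ((mkQ l).pts n) (emptyB.pts n) = 0 := by
        apply pairCost_diag' <;> simp [hpts, emptyB]
      simp [hf, matchDom, matchCod, this, Real.zero_rpow hp0]
    | inr n =>
      have : pairCost (diagProj (emptyB.pts n)) (diagProj ((mkQ l).pts n)) = 0 :=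
        pairCost_diag' rfl rfl
      simp [hf, matchDom, matchCod, this, Real.zero_rpow hp0]
  have hsum : ∑' i, f i ≠ ⊤ := by
    rw [tsum_eq_sum h0]
    refine (ENNReal.sum_lt_top.mpr ?_).ne
    intro a _
    exact ENNReal.ofReal_lt_top
  have hle : wassersteinB p (mkQ l) emptyB ≤ (∑' i, f i) ^ (1 / p) :=
    iInf_le _ (Equiv.refl (ℕ ⊕ ℕ))
  exact ne_top_of_le_ne_top (ENNReal.rpow_ne_top_of_nonneg (by positivity) hsum) hle

/-- The matching permutation: fix indices in `F`, swap `inl`/`inr` outside `F`. -/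
noncomputable def swapFun (F : Set ℕ) : ℕ ⊕ ℕ → ℕ ⊕ ℕ
  | Sum.inl n => if n ∈ F then Sum.inl n else Sum.inr n
  | Sum.inr n => if n ∈ F then Sum.inr n else Sum.inl n

lemma swapFun_involutive (F : Set ℕ) : Function.Involutive (swapFun F) := by
  intro i
  cases i with
  | inl n => by_cases h : n ∈ F <;> simp [swapFun, h]
  | inr n => by_cases h : n ∈ F <;> simp [swapFun, h]

noncomputable def swapPerm (F : Set ℕ) : (ℕ ⊕ ℕ) ≃ (ℕ ⊕ ℕ) :=
  ⟨swapFun F, swapFun F, swapFun_involutive F, swapFun_involutive F⟩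

/-- Separability of the space of diagrams in `B̄` with finite `p`-th moment
(`W_p(X, ∅) < ∞`), endowed with the `(c·t^q)`-Prokhorov distance: there is a countable
subset `S` of the space such that every diagram of the space lies within distance `ε`
of some element of `S`, for every `ε > 0`. -/
theorem barB_finite_moment_separable (p q c : ℝ) (hp : 1 ≤ p) (hq : 0 < q) (hc : 0 < c) :
    ∃ S : Set BarB, S.Countable ∧ (∀ Z ∈ S, wassersteinB p Z emptyB ≠ ⊤) ∧
      ∀ X : BarB, wassersteinB p X emptyB ≠ ⊤ →
        ∀ ε : ℝ, 0 < ε →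
          ∃ Z ∈ S, prokhorovB (fun t => c * t ^ q) X Z < ENNReal.ofReal ε := by
  classical
  refine ⟨Set.range mkQ, Set.countable_range _, ?_, ?_⟩
  · rintro Z ⟨l, rfl⟩
    exact mkQ_wasserstein_ne_top p hp l
  · intro X _ ε hε
    set δ := ε / 2 with hδdef
    have hδ : 0 < δ := by positivity
    set Fs : Set ℕ := {n | δ < dist (X.pts n) (diagProj (X.pts n))} with hFsdef
    have hFfin : Fs.Finite := X.finitePers δ hδ
    obtain ⟨m, hm⟩ := hFfin.bddAbove
    have hFM : ∀ n ∈ Fs, n < m + 1 := fun n hn => Nat.lt_succ_of_le (hm hn)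
    set h : ℕ → ℚ × ℚ := fun n =>
      if hn : n ∈ Fs then (ratApprox (X.pts n) (X.birth_le_death n) hδ).choose else 0 with hh
    set l : List (ℚ × ℚ) := (List.range (m + 1)).map h with hl
    set Z := mkQ l with hZ
    refine ⟨Z, ⟨l, rfl⟩, ?_⟩
    have hgetD : ∀ n, l.getD n 0 = if n < m + 1 then h n else 0 := getD_map_range h (m + 1)
    -- Z.pts for indices outside Fs is the origin (a diagonal point)
    have hZ_nmem : ∀ n ∉ Fs, Z.pts n = (0, 0) := by
      intro n hn
      have h0 : l.getD n 0 = 0 := by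
        rw [hgetD n]
        split
        · simp only [hh]; exact dif_neg hn
        · rfl
      show (if ((l.getD n 0).1 : ℝ) ≤ ((l.getD n 0).2 : ℝ)
        then (((l.getD n 0).1 : ℝ), ((l.getD n 0).2 : ℝ)) else ((0 : ℝ), (0 : ℝ))) = (0, 0)
      rw [h0]; norm_num
    -- Z.pts for indices in Fs is δ-close to X.pts
    have hZ_mem : ∀ n ∈ Fs, dist (Z.pts n) (X.pts n) < δ := by
      intro n hn
      have hlt := hFM n hn
      have hgd : l.getD n 0 = (ratApprox (X.pts n) (X.birth_le_death n) hδ).choose := by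
        rw [hgetD n, if_pos hlt, hh]; exact dif_pos hn
      obtain ⟨hle, hdist⟩ := (ratApprox (X.pts n) (X.birth_le_death n) hδ).choose_spec
      have : Z.pts n = (((l.getD n 0).1 : ℝ), ((l.getD n 0).2 : ℝ)) := by
        show (if ((l.getD n 0).1 : ℝ) ≤ ((l.getD n 0).2 : ℝ)
          then (((l.getD n 0).1 : ℝ), ((l.getD n 0).2 : ℝ)) else ((0 : ℝ), (0 : ℝ))) = _
        rw [hgd]; exact if_pos hle
      rw [this, hgd]
      exact hdist
    -- the matching has no pair of cost exceeding δ
    have hempty :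
        {i | δ < pairCost (matchDom X Z i) (matchCod X Z ((swapPerm Fs) i))} = ∅ := by
      ext i
      simp only [Set.mem_setOf_eq, Set.mem_empty_iff_false, iff_false, not_lt]
      cases i with
      | inl n =>
        by_cases hn : n ∈ Fs
        · have he : (swapPerm Fs) (Sum.inl n) = Sum.inl n := if_pos hn
          rw [he]
          show pairCost (X.pts n) (Z.pts n) ≤ δ
          calc pairCost (X.pts n) (Z.pts n) ≤ dist (X.pts n) (Z.pts n) :=
                pairCost_le_dist _ _
            _ = dist (Z.pts n) (X.pts n) := dist_comm _ _
            _ ≤ δ := (hZ_mem n hn).le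
        · have he : (swapPerm Fs) (Sum.inl n) = Sum.inr n := if_neg hn
          rw [he]
          show pairCost (X.pts n) (diagProj (X.pts n)) ≤ δ
          calc pairCost (X.pts n) (diagProj (X.pts n))
              ≤ dist (X.pts n) (diagProj (X.pts n)) := pairCost_le_dist _ _
            _ ≤ δ := not_lt.mp hn
      | inr n =>
        by_cases hn : n ∈ Fs
        · have he : (swapPerm Fs) (Sum.inr n) = Sum.inr n := if_pos hn
          rw [he]
          show pairCost (diagProj (Z.pts n)) (diagProj (X.pts n)) ≤ δ
          rw [pairCost_diag' rfl rfl]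
          exact hδ.le
        · have he : (swapPerm Fs) (Sum.inr n) = Sum.inl n := if_neg hn
          rw [he]
          show pairCost (diagProj (Z.pts n)) (Z.pts n) ≤ δ
          rw [pairCost_diag' rfl (by rw [hZ_nmem n hn])]
          exact hδ.le
    have hbp : bprofileB X Z δ < ENNReal.ofReal (c * δ ^ q) := by
      have h1 : bprofileB X Z δ ≤
          (({i | δ < pairCost (matchDom X Z i) (matchCod X Z ((swapPerm Fs) i))}.encard
            : ℕ∞) : ℝ≥0∞) :=
        iInf_le _ (swapPerm Fs)
      rw [hempty, Set.encard_empty] at h1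
      have h1' : bprofileB X Z δ ≤ 0 := by simpa using h1
      refine lt_of_le_of_lt h1' ?_
      exact ENNReal.ofReal_pos.mpr (mul_pos hc (Real.rpow_pos_of_pos hδ q))
    have hle : prokhorovB (fun t => c * t ^ q) X Z ≤ ENNReal.ofReal δ :=
      iInf_le (fun t : {t : ℝ // 0 < t ∧ bprofileB X Z t < ENNReal.ofReal (c * t ^ q)} =>
        ENNReal.ofReal t.1) ⟨δ, hδ, hbp⟩
    refine lt_of_le_of_lt hle ?_
    rw [ENNReal.ofReal_lt_ofReal_iff hε]
    linarith
end

section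
/- Let f : [0,∞) → [0,∞) be monotonically increasing and let ε > 0 satisfy f(ε) ≤ 1. If X, Y are persistence diagrams with π_f(X,Y) < ε, then D_{X,Y}(ε) = 0 and consequently W_∞(X,Y) ≤ ε; that is, at small scales the f-Prokhorov distance and the bottleneck distance coincide. -/
open scoped ENNReal Classical

/-- At small scales the `f`-Prokhorov and bottleneck distances coincide: if `f` is
monotonically increasing, `ε > 0` satisfies `f(ε) ≤ 1` and `π_f(X,Y) < ε`, then
`D_{X,Y}(ε) = 0` and consequently `W_∞(X,Y) ≤ ε`. -/
theorem prokhorov_small_scale_bottleneck (f : ℝ → ℝ)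
    (hf_nonneg : ∀ t, 0 ≤ t → 0 ≤ f t)
    (hf_mono : ∀ s t, 0 ≤ s → s ≤ t → f s ≤ f t)
    (ε : ℝ) (hε : 0 < ε) (hfε : f ε ≤ 1)
    (X Y : PD) (h : prokhorov f X Y < ENNReal.ofReal ε) :
    bprofile X Y ε = 0 ∧ bottleneckDist X Y ≤ ε := by
  -- extract a good scale t < ε
  obtain ⟨⟨t, ht0, htb⟩, htε⟩ := iInf_lt_iff.mp h
  simp only at htε
  have htlt : t < ε := by
    have := (ENNReal.ofReal_lt_ofReal_iff hε).mp htε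
    exact this
  -- bprofile X Y t < 1
  have h1 : bprofile X Y t < 1 := by
    refine lt_of_lt_of_le htb ?_
    have : ENNReal.ofReal (f t) ≤ ENNReal.ofReal 1 :=
      ENNReal.ofReal_le_ofReal (le_trans (hf_mono t ε ht0.le htlt.le) hfε)
    simpa using this
  obtain ⟨⟨P, hP⟩, hPlt⟩ := iInf_lt_iff.mp h1
  simp only at hPlt
  have hcount : Multiset.countP (fun uv => t < pairCost uv.1 uv.2) P = 0 := by
    by_contra hc
    have h1le : (1:ℕ) ≤ Multiset.countP (fun uv => t < pairCost uv.1 uv.2) P :=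
      Nat.one_le_iff_ne_zero.mpr hc
    have : (1:ℝ≥0∞) ≤ ((Multiset.countP (fun uv => t < pairCost uv.1 uv.2) P : ℕ) : ℝ≥0∞) := by
      exact_mod_cast h1le
    exact absurd hPlt (not_lt.mpr this)
  have hall : ∀ uv ∈ P, pairCost uv.1 uv.2 ≤ t := by
    intro uv huv
    have := Multiset.countP_eq_zero.mp hcount uv huv
    exact not_lt.mp this
  have hcountε : Multiset.countP (fun uv => ε < pairCost uv.1 uv.2) P = 0 := by
    refine Multiset.countP_eq_zero.mpr ?_
    intro uv huv
    exact not_lt.mpr (le_trans (hall uv huv) htlt.le)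
  constructor
  · refine le_antisymm ?_ zero_le
    have : bprofile X Y ε ≤
        ((Multiset.countP (fun uv => ε < pairCost uv.1 uv.2) P : ℕ) : ℝ≥0∞) :=
      iInf_le _ (⟨P, hP⟩ : {P : Multiset ((ℝ × ℝ) × (ℝ × ℝ)) // IsMatching X Y P})
    simpa [hcountε] using this
  · have hmem : ε ∈ {r : ℝ | ∃ P, IsMatching X Y P ∧ ∀ uv ∈ P, pairCost uv.1 uv.2 ≤ r} :=
      ⟨P, hP, fun uv huv => le_trans (hall uv huv) htlt.le⟩
    by_cases hb : BddBelow {r : ℝ | ∃ P, IsMatching X Y P ∧ ∀ uv ∈ P, pairCost uv.1 uv.2 ≤ r}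
    · exact csInf_le hb hmem
    · rw [bottleneckDist, Real.sInf_of_not_bddBelow hb]; exact hε.le
end

section
/- Let X, Y be finite persistence diagrams and t ≥ 0. Let G = (U ⊔ V, E) be the bipartite graph with U = X₀ ⊔ Y₀', V = Y₀ ⊔ X₀', and an edge {u,v} ∈ E if and only if one of the following holds: u ∈ X₀, v ∈ Y₀ and d(u,v) ≤ t; u ∈ X₀, v ∈ X₀' is its diagonal projection and d(u,v) ≤ t; v ∈ Y₀, u ∈ Y₀' is its diagonal projection and d(u,v) ≤ t; or u ∈ Y₀' and v ∈ X₀'. Then the maximum cardinality M of a matching in G satisfies M = sup_η |{u : d(u,η(u)) ≤ t}|, where the supremum is over all matchings η between X and Y; equivalently, D_{X,Y}(t) = |X₀| + |Y₀| − M. -/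
open scoped ENNReal Classical

/-- The edge relation of the bipartite graph `G = (U ⊔ V, E)` with `U = X₀ ⊔ Y₀'` and
`V = Y₀ ⊔ X₀'`, for diagrams with off-diagonal points `x : Fin a → ℝ × ℝ` and
`y : Fin b → ℝ × ℝ`: off-diagonal points are joined if their distance is `≤ t`, a point is
joined to its own diagonal projection if their distance is `≤ t`, and projections in `Y₀'`
are always joined to projections in `X₀'`. -/
noncomputable def GEdge {a b : ℕ} (x : Fin a → ℝ × ℝ) (y : Fin b → ℝ × ℝ) (t : ℝ) :
    Fin a ⊕ Fin b → Fin b ⊕ Fin a → Prop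
  | Sum.inl i, Sum.inl j => dist (x i) (y j) ≤ t
  | Sum.inl i, Sum.inr i' => i' = i ∧ dist (x i) (diagProj (x i)) ≤ t
  | Sum.inr j, Sum.inl j' => j' = j ∧ dist (diagProj (y j)) (y j) ≤ t
  | Sum.inr _, Sum.inr _ => True

/-- A matching in the bipartite graph `G`: a set of pairwise disjoint edges. -/
noncomputable def IsGraphMatching {a b : ℕ} (x : Fin a → ℝ × ℝ) (y : Fin b → ℝ × ℝ)
    (t : ℝ) (M : Finset ((Fin a ⊕ Fin b) × (Fin b ⊕ Fin a))) : Prop :=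
  (∀ e ∈ M, GEdge x y t e.1 e.2) ∧
  (∀ e ∈ M, ∀ e' ∈ M, e.1 = e'.1 → e = e') ∧
  (∀ e ∈ M, ∀ e' ∈ M, e.2 = e'.2 → e = e')

lemma diagProj_diag (p : ℝ × ℝ) : (diagProj p).1 = (diagProj p).2 := rfl

lemma pairCost_eq_dist (p q : ℝ × ℝ) (h : ¬ (p.1 = p.2 ∧ q.1 = q.2)) :
    pairCost p q = dist p q := if_neg h

lemma pairCost_eq_zero (p q : ℝ × ℝ) (h1 : p.1 = p.2) (h2 : q.1 = q.2) :
    pairCost p q = 0 := if_pos ⟨h1, h2⟩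

lemma dist_diagProj_le (p q : ℝ × ℝ) (hq : q.1 = q.2) :
    dist p (diagProj p) ≤ dist p q := by
  rcases p with ⟨p1, p2⟩
  rcases q with ⟨s, s'⟩
  simp only at hq
  subst hq
  rw [Prod.dist_eq, Prod.dist_eq]
  simp only [diagProj, Real.dist_eq]
  have e1 : p1 - (p1 + p2) / 2 = (p1 - p2) / 2 := by ring
  have e2 : p2 - (p1 + p2) / 2 = -((p1 - p2) / 2) := by ring
  have t1 : |p1 - s| ≤ |p1 - s| ⊔ |p2 - s| := le_max_left _ _
  have t2 : |p2 - s| ≤ |p1 - s| ⊔ |p2 - s| := le_max_right _ _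
  have t3 : |p1 - p2| ≤ |p1 - s| + |s - p2| := abs_sub_le _ _ _
  rw [abs_sub_comm s p2] at t3
  have h4 : |(p1 - p2) / 2| ≤ |p1 - s| ⊔ |p2 - s| := by
    rw [abs_div]
    have : |p1 - p2| ≤ 2 * (|p1 - s| ⊔ |p2 - s|) := by linarith
    rw [abs_of_pos (by norm_num : (0:ℝ) < 2)]
    linarith
  apply max_le
  · rw [e1]; exact h4
  · rw [e2, abs_neg]; exact h4

lemma univ_val_eq_cons {ι : Type} [Fintype ι] [DecidableEq ι] (i₀ : ι) :
    (Finset.univ : Finset ι).val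
      = i₀ ::ₘ Multiset.map Subtype.val (Finset.univ : Finset {i // i ≠ i₀}).val := by
  have h : Multiset.map Subtype.val (Finset.univ : Finset {i // i ≠ i₀}).val
      = (Finset.univ.erase i₀).val := by
    have h2 := Finset.subtype_map (fun i => i ≠ i₀) (s := (Finset.univ : Finset ι))
    rw [Finset.subtype_univ, Finset.filter_ne'] at h2
    rw [← h2]
    rfl
  rw [h, Finset.erase_val, Multiset.cons_erase (by simp : i₀ ∈ (Finset.univ : Finset ι).val)]

lemma card_subtype_ne {ι : Type} [Fintype ι] [DecidableEq ι] (i₀ : ι) :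
    Fintype.card {i // i ≠ i₀} = Fintype.card ι - 1 := by
  have := congrArg Multiset.card (univ_val_eq_cons i₀)
  simp only [Multiset.card_cons, Multiset.card_map] at this
  have hc : Multiset.card (Finset.univ : Finset ι).val = Fintype.card ι := rfl
  have hc2 : Multiset.card (Finset.univ : Finset {i // i ≠ i₀}).val = Fintype.card {i // i ≠ i₀} := rfl
  omega

lemma exists_equiv_of_marginals {α β : Type} :
    ∀ (n : ℕ) (ι κ : Type) [Fintype ι] [DecidableEq ι] [Fintype κ] [DecidableEq κ]
      (f : ι → α) (g : κ → β) (P : Multiset (α × β)),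
      Fintype.card ι = n →
      P.map Prod.fst = Multiset.map f Finset.univ.val →
      P.map Prod.snd = Multiset.map g Finset.univ.val →
      ∃ σ : ι ≃ κ, P = Multiset.map (fun i => (f i, g (σ i))) Finset.univ.val := by
  intro n
  induction n with
  | zero =>
    intro ι κ _ _ _ _ f g P hcard h1 h2
    have hι : IsEmpty ι := Fintype.card_eq_zero_iff.mp hcard
    have hu : (Finset.univ : Finset ι) = ∅ := Finset.univ_eq_empty
    have hP : P = 0 := by
      have := h1
      rw [hu] at this
      simpa using this
    have hκv : (Finset.univ : Finset κ).val = 0 := by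
      have := h2
      rw [hP] at this
      simp only [Multiset.map_zero] at this
      exact (Multiset.map_eq_zero.mp this.symm)
    have hκ : IsEmpty κ := by
      rw [← Fintype.card_eq_zero_iff]
      have : Multiset.card (Finset.univ : Finset κ).val = Fintype.card κ := rfl
      rw [hκv] at this
      simpa using this.symm
    exact ⟨Equiv.equivOfIsEmpty ι κ, by rw [hP, hu]; simp⟩
  | succ n IH =>
    intro ι κ _ _ _ _ f g P hcard h1 h2
    have hPcard : Multiset.card P = n + 1 := by
      have := congrArg Multiset.card h1
      simp only [Multiset.card_map] at this
      rw [this]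
      have : Multiset.card (Finset.univ : Finset ι).val = Fintype.card ι := rfl
      rw [this, hcard]
    have hPne : P ≠ 0 := by
      intro h0; rw [h0] at hPcard; simp at hPcard
    obtain ⟨p, hp⟩ := Multiset.exists_mem_of_ne_zero hPne
    have hp1 : p.1 ∈ P.map Prod.fst := Multiset.mem_map_of_mem _ hp
    rw [h1] at hp1
    obtain ⟨i₀, _, hi₀⟩ := Multiset.mem_map.mp hp1
    have hp2 : p.2 ∈ P.map Prod.snd := Multiset.mem_map_of_mem _ hp
    rw [h2] at hp2
    obtain ⟨j₀, _, hj₀⟩ := Multiset.mem_map.mp hp2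
    set P' := P.erase p with hP'
    have hPc : p ::ₘ P' = P := Multiset.cons_erase hp
    have h1' : P'.map Prod.fst
        = Multiset.map (fun i' : {i // i ≠ i₀} => f i'.val) Finset.univ.val := by
      have : P.map Prod.fst = p.1 ::ₘ P'.map Prod.fst := by
        rw [← hPc]; simp
      rw [h1, univ_val_eq_cons i₀, Multiset.map_cons, hi₀, Multiset.map_map] at this
      exact ((Multiset.cons_inj_right _).mp this.symm)
    have h2' : P'.map Prod.snd
        = Multiset.map (fun j' : {j // j ≠ j₀} => g j'.val) Finset.univ.val := by
      have : P.map Prod.snd = p.2 ::ₘ P'.map Prod.snd := by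
        rw [← hPc]; simp
      rw [h2, univ_val_eq_cons j₀, Multiset.map_cons, hj₀, Multiset.map_map] at this
      exact ((Multiset.cons_inj_right _).mp this.symm)
    have hcard' : Fintype.card {i // i ≠ i₀} = n := by
      rw [card_subtype_ne, hcard]
      omega
    obtain ⟨σ', hσ'⟩ := IH {i // i ≠ i₀} {j // j ≠ j₀}
      (fun i' => f i'.val) (fun j' => g j'.val) P' hcard' h1' h2'
    refine ⟨⟨fun i => if h : i = i₀ then j₀ else (σ' ⟨i, h⟩).val,
            fun j => if h : j = j₀ then i₀ else (σ'.symm ⟨j, h⟩).val, ?_, ?_⟩, ?_⟩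
    · intro i
      by_cases h : i = i₀
      · subst h; simp
      · simp only [dif_neg h, dif_neg (σ' ⟨i, h⟩).2]
        have h3 : (⟨(σ' ⟨i, h⟩).val, (σ' ⟨i, h⟩).2⟩ : {j // j ≠ j₀}) = σ' ⟨i, h⟩ := rfl
        rw [h3, Equiv.symm_apply_apply]
    · intro j
      by_cases h : j = j₀
      · subst h; simp
      · simp only [dif_neg h, dif_neg (σ'.symm ⟨j, h⟩).2]
        have h3 : (⟨(σ'.symm ⟨j, h⟩).val, (σ'.symm ⟨j, h⟩).2⟩ : {i // i ≠ i₀}) = σ'.symm ⟨j, h⟩ := rfl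
        rw [h3, Equiv.apply_symm_apply]
    · simp only [Equiv.coe_fn_mk]
      have key : Multiset.map (fun i => (f i, g (if h : i = i₀ then j₀ else (σ' ⟨i, h⟩).val)))
          Finset.univ.val = p ::ₘ P' := by
        rw [univ_val_eq_cons i₀, Multiset.map_cons, Multiset.map_map]
        congr 1
        · simp [hi₀, hj₀]
        · rw [hσ']
          apply Multiset.map_congr rfl
          intro i' _
          simp only [Function.comp_apply, dif_neg i'.2]
      rw [key, hPc]


section MainDev
variable {a b : ℕ} (x : Fin a → ℝ × ℝ) (y : Fin b → ℝ × ℝ)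

noncomputable def uFun : Fin a ⊕ Fin b → ℝ × ℝ := Sum.elim x (fun j => diagProj (y j))
noncomputable def vFun : Fin b ⊕ Fin a → ℝ × ℝ := Sum.elim y (fun i => diagProj (x i))

lemma sum_univ_val (α β : Type) [Fintype α] [Fintype β] :
    (Finset.univ : Finset (α ⊕ β)).val
      = Multiset.map Sum.inl (Finset.univ : Finset α).val
        + Multiset.map Sum.inr (Finset.univ : Finset β).val := by
  rw [← Finset.univ_disjSum_univ]
  rfl

noncomputable def pairsOf (σ : Fin a ⊕ Fin b ≃ Fin b ⊕ Fin a) : Multiset ((ℝ × ℝ) × (ℝ × ℝ)) :=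
  Multiset.map (fun w => (uFun x y w, vFun x y (σ w))) Finset.univ.val

lemma map_uFun : Multiset.map (uFun x y) Finset.univ.val
    = Multiset.map x Finset.univ.val
      + Multiset.map (fun j => diagProj (y j)) Finset.univ.val := by
  rw [sum_univ_val, Multiset.map_add, Multiset.map_map, Multiset.map_map]
  rfl

lemma map_vFun : Multiset.map (vFun x y) Finset.univ.val
    = Multiset.map y Finset.univ.val
      + Multiset.map (fun i => diagProj (x i)) Finset.univ.val := by
  rw [sum_univ_val, Multiset.map_add, Multiset.map_map, Multiset.map_map]
  rfl

lemma map_univ_equiv_val (σ : Fin a ⊕ Fin b ≃ Fin b ⊕ Fin a) :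
    Multiset.map σ (Finset.univ : Finset (Fin a ⊕ Fin b)).val
      = (Finset.univ : Finset (Fin b ⊕ Fin a)).val := by
  have := congrArg Finset.val (Finset.map_univ_equiv σ)
  rw [Finset.map_val] at this
  simpa using this

lemma pairsOf_isMatching (X Y : PD)
    (hX : X.pts = Multiset.map x Finset.univ.val)
    (hY : Y.pts = Multiset.map y Finset.univ.val)
    (σ : Fin a ⊕ Fin b ≃ Fin b ⊕ Fin a) :
    IsMatching X Y (pairsOf x y σ) := by
  constructor
  · rw [pairsOf, Multiset.map_map]
    have : (Prod.fst ∘ fun w => (uFun x y w, vFun x y (σ w))) = uFun x y := rfl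
    rw [this, map_uFun, hX, hY, Multiset.map_map]
    rfl
  · rw [pairsOf, Multiset.map_map]
    have h1 : (Prod.snd ∘ fun w => (uFun x y w, vFun x y (σ w))) = vFun x y ∘ σ := rfl
    rw [h1, ← Multiset.map_map, map_univ_equiv_val, map_vFun, hX, hY, Multiset.map_map]
    rfl

lemma countP_pairsOf (σ : Fin a ⊕ Fin b ≃ Fin b ⊕ Fin a) (t : ℝ) :
    Multiset.countP (fun uv => pairCost uv.1 uv.2 ≤ t) (pairsOf x y σ)
      = (Finset.univ.filter (fun w => pairCost (uFun x y w) (vFun x y (σ w)) ≤ t)).card := by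
  rw [pairsOf, Multiset.countP_map, Finset.card_def, Finset.filter_val]

lemma card_pairsOf (σ : Fin a ⊕ Fin b ≃ Fin b ⊕ Fin a) :
    Multiset.card (pairsOf x y σ) = a + b := by
  rw [pairsOf, Multiset.card_map]
  simp [sum_univ_val]

lemma extend_to_equiv (t : ℝ) (M : Finset ((Fin a ⊕ Fin b) × (Fin b ⊕ Fin a)))
    (hM : IsGraphMatching x y t M) :
    ∃ σ : Fin a ⊕ Fin b ≃ Fin b ⊕ Fin a, ∀ e ∈ M, σ e.1 = e.2 := by
  classical
  induction M using Finset.induction_on with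
  | empty => exact ⟨Equiv.sumComm _ _, by simp⟩
  | @insert e s he IH =>
    have hs : IsGraphMatching x y t s :=
      ⟨fun e' h' => hM.1 e' (Finset.mem_insert_of_mem h'),
       fun e1 h1 e2 h2 => hM.2.1 e1 (Finset.mem_insert_of_mem h1) e2 (Finset.mem_insert_of_mem h2),
       fun e1 h1 e2 h2 => hM.2.2 e1 (Finset.mem_insert_of_mem h1) e2 (Finset.mem_insert_of_mem h2)⟩
    obtain ⟨σ', hσ'⟩ := IH hs
    refine ⟨σ'.trans (Equiv.swap (σ' e.1) e.2), ?_⟩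
    intro e' he'
    rcases Finset.mem_insert.mp he' with rfl | hmem
    · simp [Equiv.swap_apply_left]
    · have h1 : σ' e'.1 = e'.2 := hσ' e' hmem
      have hne1 : σ' e'.1 ≠ σ' e.1 := by
        intro hc
        have h2 : e'.1 = e.1 := σ'.injective hc
        have h3 := hM.2.1 e' (Finset.mem_insert_of_mem hmem) e (Finset.mem_insert_self e s) h2
        exact he (h3 ▸ hmem)
      have hne2 : σ' e'.1 ≠ e.2 := by
        rw [h1]; intro hc
        have h3 := hM.2.2 e' (Finset.mem_insert_of_mem hmem) e (Finset.mem_insert_self e s) hc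
        exact he (h3 ▸ hmem)
      simp only [Equiv.trans_apply]
      rw [Equiv.swap_apply_of_ne_of_ne hne1 hne2, h1]

lemma matching_card_le (hx : ∀ i, (x i).1 < (x i).2) (hy : ∀ j, (y j).1 < (y j).2)
    (t : ℝ) (ht : 0 ≤ t)
    (M : Finset ((Fin a ⊕ Fin b) × (Fin b ⊕ Fin a))) (hM : IsGraphMatching x y t M)
    (σ : Fin a ⊕ Fin b ≃ Fin b ⊕ Fin a) (hσ : ∀ e ∈ M, σ e.1 = e.2) :
    M.card ≤ (Finset.univ.filter (fun w => pairCost (uFun x y w) (vFun x y (σ w)) ≤ t)).card := by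
  classical
  have hinj : Set.InjOn Prod.fst (M : Set ((Fin a ⊕ Fin b) × (Fin b ⊕ Fin a))) :=
    fun e he e' he' h => hM.2.1 e he e' he' h
  rw [← Finset.card_image_of_injOn hinj]
  apply Finset.card_le_card
  intro w hw
  obtain ⟨e, he, rfl⟩ := Finset.mem_image.mp hw
  simp only [Finset.mem_filter, Finset.mem_univ, true_and]
  rw [hσ e he]
  have hedge := hM.1 e he
  obtain ⟨w1, w2⟩ := e
  rcases w1 with i | j <;> rcases w2 with j' | i'
  · have hd : dist (x i) (y j') ≤ t := hedge
    have hne : ¬ ((x i).1 = (x i).2 ∧ (y j').1 = (y j').2) := by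
      rintro ⟨h, -⟩; exact absurd h (ne_of_lt (hx i))
    simpa [uFun, vFun, pairCost_eq_dist _ _ hne] using hd
  · have hedge' : i' = i ∧ dist (x i) (diagProj (x i)) ≤ t := hedge
    have hne : ¬ ((x i).1 = (x i).2 ∧ (diagProj (x i)).1 = (diagProj (x i)).2) := by
      rintro ⟨h, -⟩; exact absurd h (ne_of_lt (hx i))
    simp only [uFun, vFun, Sum.elim_inl, Sum.elim_inr]
    rw [hedge'.1, pairCost_eq_dist _ _ hne]
    exact hedge'.2
  · have hedge' : j' = j ∧ dist (diagProj (y j)) (y j) ≤ t := hedge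
    have hne : ¬ ((diagProj (y j)).1 = (diagProj (y j)).2 ∧ (y j).1 = (y j).2) := by
      rintro ⟨-, h⟩; exact absurd h (ne_of_lt (hy j))
    simp only [uFun, vFun, Sum.elim_inl, Sum.elim_inr]
    rw [hedge'.1, pairCost_eq_dist _ _ hne]
    exact hedge'.2
  · have h0 : pairCost (uFun x y (Sum.inr j)) (vFun x y (Sum.inr i')) = 0 :=
      pairCost_eq_zero _ _ (diagProj_diag _) (diagProj_diag _)
    rw [h0]; exact ht

lemma exists_graph_matching (hx : ∀ i, (x i).1 < (x i).2) (hy : ∀ j, (y j).1 < (y j).2)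
    (t : ℝ) (ht : 0 ≤ t) (σ : Fin a ⊕ Fin b ≃ Fin b ⊕ Fin a) :
    ∃ M : Finset ((Fin a ⊕ Fin b) × (Fin b ⊕ Fin a)), IsGraphMatching x y t M ∧
      (Finset.univ.filter (fun w => pairCost (uFun x y w) (vFun x y (σ w)) ≤ t)).card
        ≤ M.card := by
  classical
  set C1 : Finset (Fin a) :=
    Finset.univ.filter (fun i => pairCost (uFun x y (Sum.inl i)) (vFun x y (σ (Sum.inl i))) ≤ t)
    with hC1def
  set C2 : Finset (Fin b) :=
    Finset.univ.filter (fun j => pairCost (uFun x y (Sum.inr j)) (vFun x y (σ (Sum.inr j))) ≤ t)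
    with hC2def
  have hsplit : (Finset.univ.filter
      (fun w => pairCost (uFun x y w) (vFun x y (σ w)) ≤ t)).card = C1.card + C2.card := by
    rw [Finset.card_def, Finset.filter_val, sum_univ_val, Multiset.filter_add,
        Multiset.filter_map, Multiset.filter_map, Multiset.card_add,
        Multiset.card_map, Multiset.card_map, hC1def, hC2def,
        Finset.card_def, Finset.card_def, Finset.filter_val, Finset.filter_val]
    rfl
  set P1 := C1.filter (fun i => (σ (Sum.inl i)).isLeft = true) with hP1def
  set P2 := C1.filter (fun i => ¬ (σ (Sum.inl i)).isLeft = true) with hP2def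
  set P3 := C2.filter (fun j => (σ (Sum.inr j)).isLeft = true) with hP3def
  set P4 := C2.filter (fun j => ¬ (σ (Sum.inr j)).isLeft = true) with hP4def
  have hC1card : P1.card + P2.card = C1.card :=
    Finset.card_filter_add_card_filter_not (fun i => (σ (Sum.inl i)).isLeft = true)
  have hC2card : P3.card + P4.card = C2.card :=
    Finset.card_filter_add_card_filter_not (fun j => (σ (Sum.inr j)).isLeft = true)
  have factP1 : ∀ i ∈ P1, ∃ jj, σ (Sum.inl i) = Sum.inl jj ∧ dist (x i) (y jj) ≤ t := by
    intro i hi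
    have h1 := Finset.mem_filter.mp hi
    obtain ⟨jj, hjj⟩ := Sum.isLeft_iff.mp h1.2
    refine ⟨jj, hjj, ?_⟩
    have h2 := (Finset.mem_filter.mp h1.1).2
    rw [hjj] at h2
    simp only [uFun, vFun, Sum.elim_inl] at h2
    rwa [pairCost_eq_dist _ _ (by rintro ⟨h, -⟩; exact absurd h (ne_of_lt (hx i)))] at h2
  have factP2 : ∀ i ∈ P2, ∃ kk, σ (Sum.inl i) = Sum.inr kk ∧
      dist (x i) (diagProj (x i)) ≤ t := by
    intro i hi
    have h1 := Finset.mem_filter.mp hi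
    have hR : (σ (Sum.inl i)).isRight = true := Sum.not_isLeft.mp h1.2
    obtain ⟨kk, hkk⟩ := Sum.isRight_iff.mp hR
    refine ⟨kk, hkk, ?_⟩
    have h2 := (Finset.mem_filter.mp h1.1).2
    rw [hkk] at h2
    simp only [uFun, vFun, Sum.elim_inl, Sum.elim_inr] at h2
    rw [pairCost_eq_dist _ _ (by rintro ⟨h, -⟩; exact absurd h (ne_of_lt (hx i)))] at h2
    exact le_trans (dist_diagProj_le _ _ rfl) h2
  set φ : Fin b → Fin b := fun j => Sum.elim id (fun _ => j) (σ (Sum.inr j)) with hφdef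
  have hφ : ∀ j ∈ P3, σ (Sum.inr j) = Sum.inl (φ j) := by
    intro j hj
    obtain ⟨jj, hjj⟩ := Sum.isLeft_iff.mp (Finset.mem_filter.mp hj).2
    have hj2 : φ j = jj := by simp only [hφdef]; rw [hjj]; rfl
    rw [hj2, hjj]
  have hφinj : Set.InjOn φ ↑P3 := by
    intro j hj j' hj' h
    have h1 := hφ j hj
    have h2 := hφ j' hj'
    rw [h] at h1
    exact Sum.inr_injective (σ.injective (h1.trans h2.symm))
  have factP3 : ∀ j ∈ P3, dist (diagProj (y (φ j))) (y (φ j)) ≤ t := by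
    intro j hj
    have h2 := (Finset.mem_filter.mp (Finset.mem_filter.mp hj).1).2
    rw [hφ j hj] at h2
    simp only [uFun, vFun, Sum.elim_inl, Sum.elim_inr] at h2
    rw [pairCost_eq_dist _ _ (by rintro ⟨-, h⟩; exact absurd h (ne_of_lt (hy (φ j))))] at h2
    calc dist (diagProj (y (φ j))) (y (φ j)) = dist (y (φ j)) (diagProj (y (φ j))) :=
          dist_comm _ _
      _ ≤ dist (y (φ j)) (diagProj (y j)) := dist_diagProj_le _ _ rfl
      _ = dist (diagProj (y j)) (y (φ j)) := dist_comm _ _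
      _ ≤ t := h2
  set L3 := P3.image φ with hL3def
  have hL3 : L3.card = P3.card := Finset.card_image_of_injOn hφinj
  have hC2b : P3.card + P4.card ≤ b := by
    rw [hC2card]
    simpa using Finset.card_le_univ C2
  have hb1 : P4.card ≤ (Finset.univ \ L3).card := by
    rw [Finset.card_sdiff_of_subset (Finset.subset_univ _)]
    simp only [Finset.card_univ, Fintype.card_fin]
    omega
  have hkey2 : P2.card + P4.card ≤ a := by
    have hinj2 : Set.InjOn (fun i => σ (Sum.inl i)) ↑P2 :=
      fun i _ i' _ h => Sum.inl_injective (σ.injective h)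
    have hinj4 : Set.InjOn (fun j => σ (Sum.inr j)) ↑P4 :=
      fun j _ j' _ h => Sum.inr_injective (σ.injective h)
    have hdisj : Disjoint (P2.image (fun i => σ (Sum.inl i)))
        (P4.image (fun j => σ (Sum.inr j))) := by
      rw [Finset.disjoint_left]
      rintro w hw2 hw4
      obtain ⟨i, _, rfl⟩ := Finset.mem_image.mp hw2
      obtain ⟨j, _, hj⟩ := Finset.mem_image.mp hw4
      exact Sum.inr_ne_inl (σ.injective hj)
    have hsub : (P2.image (fun i => σ (Sum.inl i))) ∪ (P4.image (fun j => σ (Sum.inr j)))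
        ⊆ Finset.univ.map ⟨Sum.inr, Sum.inr_injective⟩ := by
      intro w hw
      rcases Finset.mem_union.mp hw with hw | hw
      · obtain ⟨i, hi, rfl⟩ := Finset.mem_image.mp hw
        obtain ⟨kk, hkk⟩ := Sum.isRight_iff.mp (Sum.not_isLeft.mp (Finset.mem_filter.mp hi).2)
        rw [hkk]
        exact Finset.mem_map.mpr ⟨kk, Finset.mem_univ _, rfl⟩
      · obtain ⟨j, hj, rfl⟩ := Finset.mem_image.mp hw
        obtain ⟨kk, hkk⟩ := Sum.isRight_iff.mp (Sum.not_isLeft.mp (Finset.mem_filter.mp hj).2)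
        rw [hkk]
        exact Finset.mem_map.mpr ⟨kk, Finset.mem_univ _, rfl⟩
    have hcard := Finset.card_le_card hsub
    rw [Finset.card_union_of_disjoint hdisj, Finset.card_image_of_injOn hinj2,
        Finset.card_image_of_injOn hinj4, Finset.card_map] at hcard
    simpa using hcard
  have hb2 : P4.card ≤ (Finset.univ \ P2).card := by
    rw [Finset.card_sdiff_of_subset (Finset.subset_univ _)]
    simp only [Finset.card_univ, Fintype.card_fin]
    omega
  obtain ⟨ρ⟩ := Function.Embedding.nonempty_of_card_le
    (α := {j // j ∈ P4}) (β := {v // v ∈ Finset.univ \ L3})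
    (by rw [Fintype.card_coe, Fintype.card_coe]; exact hb1)
  obtain ⟨κe⟩ := Function.Embedding.nonempty_of_card_le
    (α := {j // j ∈ P4}) (β := {v // v ∈ Finset.univ \ P2})
    (by rw [Fintype.card_coe, Fintype.card_coe]; exact hb2)
  set M1 := P1.image (fun i => ((Sum.inl i : Fin a ⊕ Fin b), σ (Sum.inl i))) with hM1
  set M2 := P2.image
    (fun i => ((Sum.inl i : Fin a ⊕ Fin b), (Sum.inr i : Fin b ⊕ Fin a))) with hM2
  set M3 := P3.image (fun j => ((Sum.inr (φ j) : Fin a ⊕ Fin b), σ (Sum.inr j))) with hM3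
  set M4 := P4.attach.image
    (fun j => ((Sum.inr (ρ j).val : Fin a ⊕ Fin b), (Sum.inr (κe j).val : Fin b ⊕ Fin a)))
    with hM4
  refine ⟨M1 ∪ M2 ∪ M3 ∪ M4, ⟨?_, ?_, ?_⟩, ?_⟩
  · -- edges
    intro e he
    rcases Finset.mem_union.mp he with he' | he4
    · rcases Finset.mem_union.mp he' with he'' | he3
      · rcases Finset.mem_union.mp he'' with he1 | he2
        · obtain ⟨i, hi, rfl⟩ := Finset.mem_image.mp he1
          obtain ⟨jj, hjj, hd⟩ := factP1 i hi
          show GEdge x y t (Sum.inl i) (σ (Sum.inl i))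
          rw [hjj]
          exact hd
        · obtain ⟨i, hi, rfl⟩ := Finset.mem_image.mp he2
          obtain ⟨kk, hkk, hd⟩ := factP2 i hi
          exact ⟨rfl, hd⟩
      · obtain ⟨j, hj, rfl⟩ := Finset.mem_image.mp he3
        show GEdge x y t (Sum.inr (φ j)) (σ (Sum.inr j))
        rw [hφ j hj]
        exact ⟨rfl, factP3 j hj⟩
    · obtain ⟨j, hj, rfl⟩ := Finset.mem_image.mp he4
      exact trivial
  · -- firsts injective
    intro e he e' he' h
    rcases Finset.mem_union.mp he with hA | hA4
    · rcases Finset.mem_union.mp hA with hA' | hA3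
      · rcases Finset.mem_union.mp hA' with hA1 | hA2
        · obtain ⟨i, hi, rfl⟩ := Finset.mem_image.mp hA1
          rcases Finset.mem_union.mp he' with hB | hB4
          · rcases Finset.mem_union.mp hB with hB' | hB3
            · rcases Finset.mem_union.mp hB' with hB1 | hB2
              · obtain ⟨i', hi', rfl⟩ := Finset.mem_image.mp hB1
                obtain rfl := Sum.inl_injective h
                rfl
              · obtain ⟨i', hi', rfl⟩ := Finset.mem_image.mp hB2
                obtain rfl := Sum.inl_injective h
                exact absurd (Finset.mem_filter.mp hi).2 (Finset.mem_filter.mp hi').2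
            · obtain ⟨j', hj', rfl⟩ := Finset.mem_image.mp hB3
              simp at h
          · obtain ⟨j', hj', rfl⟩ := Finset.mem_image.mp hB4
            simp at h
        · obtain ⟨i, hi, rfl⟩ := Finset.mem_image.mp hA2
          rcases Finset.mem_union.mp he' with hB | hB4
          · rcases Finset.mem_union.mp hB with hB' | hB3
            · rcases Finset.mem_union.mp hB' with hB1 | hB2
              · obtain ⟨i', hi', rfl⟩ := Finset.mem_image.mp hB1
                obtain rfl := Sum.inl_injective h
                exact absurd (Finset.mem_filter.mp hi').2 (Finset.mem_filter.mp hi).2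
              · obtain ⟨i', hi', rfl⟩ := Finset.mem_image.mp hB2
                obtain rfl := Sum.inl_injective h
                rfl
            · obtain ⟨j', hj', rfl⟩ := Finset.mem_image.mp hB3
              simp at h
          · obtain ⟨j', hj', rfl⟩ := Finset.mem_image.mp hB4
            simp at h
      · obtain ⟨j, hj, rfl⟩ := Finset.mem_image.mp hA3
        rcases Finset.mem_union.mp he' with hB | hB4
        · rcases Finset.mem_union.mp hB with hB' | hB3
          · rcases Finset.mem_union.mp hB' with hB1 | hB2
            · obtain ⟨i', hi', rfl⟩ := Finset.mem_image.mp hB1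
              simp at h
            · obtain ⟨i', hi', rfl⟩ := Finset.mem_image.mp hB2
              simp at h
          · obtain ⟨j', hj', rfl⟩ := Finset.mem_image.mp hB3
            obtain h2 := Sum.inr_injective h
            obtain rfl := hφinj (Finset.mem_coe.mpr hj) (Finset.mem_coe.mpr hj') h2
            rfl
        · obtain ⟨j', hj', rfl⟩ := Finset.mem_image.mp hB4
          obtain h2 := Sum.inr_injective h
          have hmem : φ j ∈ L3 := Finset.mem_image_of_mem φ hj
          rw [h2] at hmem
          exact absurd hmem (Finset.mem_sdiff.mp (ρ j').2).2
    · obtain ⟨j, hj, rfl⟩ := Finset.mem_image.mp hA4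
      rcases Finset.mem_union.mp he' with hB | hB4
      · rcases Finset.mem_union.mp hB with hB' | hB3
        · rcases Finset.mem_union.mp hB' with hB1 | hB2
          · obtain ⟨i', hi', rfl⟩ := Finset.mem_image.mp hB1
            simp at h
          · obtain ⟨i', hi', rfl⟩ := Finset.mem_image.mp hB2
            simp at h
        · obtain ⟨j', hj', rfl⟩ := Finset.mem_image.mp hB3
          obtain h2 := Sum.inr_injective h
          have hmem : φ j' ∈ L3 := Finset.mem_image_of_mem φ hj'
          rw [← h2] at hmem
          exact absurd hmem (Finset.mem_sdiff.mp (ρ j).2).2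
      · obtain ⟨j', hj', rfl⟩ := Finset.mem_image.mp hB4
        obtain rfl := ρ.injective (Subtype.ext (Sum.inr_injective h))
        rfl
  · -- seconds injective
    intro e he e' he' h
    rcases Finset.mem_union.mp he with hA | hA4
    · rcases Finset.mem_union.mp hA with hA' | hA3
      · rcases Finset.mem_union.mp hA' with hA1 | hA2
        · obtain ⟨i, hi, rfl⟩ := Finset.mem_image.mp hA1
          obtain ⟨jj, hjj, -⟩ := factP1 i hi
          rcases Finset.mem_union.mp he' with hB | hB4
          · rcases Finset.mem_union.mp hB with hB' | hB3
            · rcases Finset.mem_union.mp hB' with hB1 | hB2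
              · obtain ⟨i', hi', rfl⟩ := Finset.mem_image.mp hB1
                obtain rfl := Sum.inl_injective (σ.injective h)
                rfl
              · obtain ⟨i', hi', rfl⟩ := Finset.mem_image.mp hB2
                rw [hjj] at h
                simp at h
            · obtain ⟨j', hj', rfl⟩ := Finset.mem_image.mp hB3
              exact absurd (σ.injective h) (by simp)
          · obtain ⟨j', hj', rfl⟩ := Finset.mem_image.mp hB4
            rw [hjj] at h
            simp at h
        · obtain ⟨i, hi, rfl⟩ := Finset.mem_image.mp hA2
          rcases Finset.mem_union.mp he' with hB | hB4
          · rcases Finset.mem_union.mp hB with hB' | hB3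
            · rcases Finset.mem_union.mp hB' with hB1 | hB2
              · obtain ⟨i', hi', rfl⟩ := Finset.mem_image.mp hB1
                obtain ⟨jj', hjj', -⟩ := factP1 i' hi'
                rw [hjj'] at h
                simp at h
              · obtain ⟨i', hi', rfl⟩ := Finset.mem_image.mp hB2
                obtain rfl := Sum.inr_injective h
                rfl
            · obtain ⟨j', hj', rfl⟩ := Finset.mem_image.mp hB3
              rw [hφ j' hj'] at h
              simp at h
          · obtain ⟨j', hj', rfl⟩ := Finset.mem_image.mp hB4
            obtain h2 := Sum.inr_injective h
            have := (Finset.mem_sdiff.mp (κe j').2).2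
            rw [← h2] at this
            exact absurd hi this
      · obtain ⟨j, hj, rfl⟩ := Finset.mem_image.mp hA3
        rcases Finset.mem_union.mp he' with hB | hB4
        · rcases Finset.mem_union.mp hB with hB' | hB3
          · rcases Finset.mem_union.mp hB' with hB1 | hB2
            · obtain ⟨i', hi', rfl⟩ := Finset.mem_image.mp hB1
              exact absurd (σ.injective h) (by simp)
            · obtain ⟨i', hi', rfl⟩ := Finset.mem_image.mp hB2
              rw [hφ j hj] at h
              simp at h
          · obtain ⟨j', hj', rfl⟩ := Finset.mem_image.mp hB3
            obtain rfl := Sum.inr_injective (σ.injective h)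
            rfl
        · obtain ⟨j', hj', rfl⟩ := Finset.mem_image.mp hB4
          rw [hφ j hj] at h
          simp at h
    · obtain ⟨j, hj, rfl⟩ := Finset.mem_image.mp hA4
      rcases Finset.mem_union.mp he' with hB | hB4
      · rcases Finset.mem_union.mp hB with hB' | hB3
        · rcases Finset.mem_union.mp hB' with hB1 | hB2
          · obtain ⟨i', hi', rfl⟩ := Finset.mem_image.mp hB1
            obtain ⟨jj', hjj', -⟩ := factP1 i' hi'
            rw [hjj'] at h
            simp at h
          · obtain ⟨i', hi', rfl⟩ := Finset.mem_image.mp hB2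
            obtain h2 := Sum.inr_injective h
            have := (Finset.mem_sdiff.mp (κe j).2).2
            rw [h2] at this
            exact absurd hi' this
        · obtain ⟨j', hj', rfl⟩ := Finset.mem_image.mp hB3
          rw [hφ j' hj'] at h
          simp at h
      · obtain ⟨j', hj', rfl⟩ := Finset.mem_image.mp hB4
        obtain rfl := κe.injective (Subtype.ext (Sum.inr_injective h))
        rfl
  · -- cardinality
    have cardM1 : M1.card = P1.card := Finset.card_image_of_injOn
      (fun i _ i' _ h => Sum.inl_injective (congrArg Prod.fst h))
    have cardM2 : M2.card = P2.card := Finset.card_image_of_injOn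
      (fun i _ i' _ h => Sum.inl_injective (congrArg Prod.fst h))
    have cardM3 : M3.card = P3.card := Finset.card_image_of_injOn
      (fun j hj j' hj' h => hφinj hj hj' (Sum.inr_injective (congrArg Prod.fst h)))
    have cardM4 : M4.card = P4.card := by
      rw [Finset.card_image_of_injOn
        (fun j _ j' _ h => ρ.injective (Subtype.ext (Sum.inr_injective (congrArg Prod.fst h)))),
        Finset.card_attach]
    have d12 : Disjoint M1 M2 := by
      rw [Finset.disjoint_left]
      rintro e he1 he2
      obtain ⟨i, hi, rfl⟩ := Finset.mem_image.mp he1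
      obtain ⟨i', hi', heq⟩ := Finset.mem_image.mp he2
      obtain ⟨jj, hjj, -⟩ := factP1 i hi
      have h2 := congrArg Prod.snd heq
      simp only at h2
      rw [hjj] at h2
      simp at h2
    have d123 : Disjoint (M1 ∪ M2) M3 := by
      rw [Finset.disjoint_left]
      rintro e he12 he3
      obtain ⟨j, hj, rfl⟩ := Finset.mem_image.mp he3
      rcases Finset.mem_union.mp he12 with h1 | h2
      · obtain ⟨i, hi, heq⟩ := Finset.mem_image.mp h1
        have := congrArg Prod.fst heq
        simp at this
      · obtain ⟨i, hi, heq⟩ := Finset.mem_image.mp h2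
        have := congrArg Prod.fst heq
        simp at this
    have d1234 : Disjoint (M1 ∪ M2 ∪ M3) M4 := by
      rw [Finset.disjoint_left]
      rintro e he123 he4
      obtain ⟨j, hj, rfl⟩ := Finset.mem_image.mp he4
      rcases Finset.mem_union.mp he123 with h12 | h3
      · rcases Finset.mem_union.mp h12 with h1 | h2
        · obtain ⟨i, hi, heq⟩ := Finset.mem_image.mp h1
          have := congrArg Prod.fst heq
          simp at this
        · obtain ⟨i, hi, heq⟩ := Finset.mem_image.mp h2
          have := congrArg Prod.fst heq
          simp at this
      · obtain ⟨j', hj', heq⟩ := Finset.mem_image.mp h3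
        have h2 := Sum.inr_injective (congrArg Prod.fst heq)
        have hmem : φ j' ∈ L3 := Finset.mem_image_of_mem φ hj'
        rw [h2] at hmem
        exact absurd hmem (Finset.mem_sdiff.mp (ρ j).2).2
    rw [Finset.card_union_of_disjoint d1234, Finset.card_union_of_disjoint d123,
        Finset.card_union_of_disjoint d12, cardM1, cardM2, cardM3, cardM4, hsplit]
    omega

end MainDev

/-- The maximum cardinality `M` of a matching in the bipartite graph `G` equals
`sup_η |{u : d(u, η u) ≤ t}|`, the supremum over all matchings `η` between the diagrams;
equivalently, `D_{X,Y}(t) = |X₀| + |Y₀| - M`. -/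
theorem graph_matching_computes_bprofile {a b : ℕ}
    (x : Fin a → ℝ × ℝ) (y : Fin b → ℝ × ℝ)
    (hx : ∀ i, (x i).1 < (x i).2) (hy : ∀ j, (y j).1 < (y j).2)
    (X Y : PD)
    (hX : X.pts = Multiset.map x Finset.univ.val)
    (hY : Y.pts = Multiset.map y Finset.univ.val)
    (t : ℝ) (ht : 0 ≤ t) :
    sSup {n : ℕ | ∃ M, IsGraphMatching x y t M ∧ M.card = n}
      = sSup {n : ℕ | ∃ P, IsMatching X Y P ∧
          n = Multiset.countP (fun uv => pairCost uv.1 uv.2 ≤ t) P} ∧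
    bprofile X Y t
      = ((a + b - sSup {n : ℕ | ∃ M, IsGraphMatching x y t M ∧ M.card = n} : ℕ) : ℝ≥0∞) := by
  classical
  set SG := {n : ℕ | ∃ M, IsGraphMatching x y t M ∧ M.card = n} with hSGdef
  set SP := {n : ℕ | ∃ P, IsMatching X Y P ∧
      n = Multiset.countP (fun uv => pairCost uv.1 uv.2 ≤ t) P} with hSPdef
  have hcardP : ∀ P, IsMatching X Y P → Multiset.card P = a + b := by
    intro P hP
    have h1 := congrArg Multiset.card hP.1
    rw [Multiset.card_map, Multiset.card_add, Multiset.card_map] at h1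
    rw [h1, hX, hY, Multiset.card_map, Multiset.card_map, ← Finset.card_def,
        ← Finset.card_def, Finset.card_univ, Finset.card_univ, Fintype.card_fin,
        Fintype.card_fin]
  have hSPbound : ∀ m ∈ SP, m ≤ a + b := by
    rintro m ⟨P, hP, rfl⟩
    exact le_trans (Multiset.countP_le_card _ _) (le_of_eq (hcardP P hP))
  have bddP : BddAbove SP := ⟨a + b, hSPbound⟩
  have hSPne : SP.Nonempty := by
    refine ⟨Multiset.countP (fun uv => pairCost uv.1 uv.2 ≤ t)
      (pairsOf x y (Equiv.sumComm (Fin a) (Fin b))), ?_⟩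
    exact ⟨pairsOf x y (Equiv.sumComm (Fin a) (Fin b)),
      pairsOf_isMatching x y X Y hX hY _, rfl⟩
  have hG0 : (0 : ℕ) ∈ SG := by
    refine ⟨∅, ⟨?_, ?_, ?_⟩, Finset.card_empty⟩ <;>
      intro e he <;> exact absurd he (Finset.notMem_empty e)
  have hGP : ∀ n ∈ SG, ∃ m ∈ SP, n ≤ m := by
    rintro n ⟨M, hM, rfl⟩
    obtain ⟨σ, hσ⟩ := extend_to_equiv x y t M hM
    refine ⟨Multiset.countP (fun uv => pairCost uv.1 uv.2 ≤ t) (pairsOf x y σ),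
      ⟨pairsOf x y σ, pairsOf_isMatching x y X Y hX hY σ, rfl⟩, ?_⟩
    rw [countP_pairsOf]
    exact matching_card_le x y hx hy t ht M hM σ hσ
  have hPG : ∀ m ∈ SP, ∃ n ∈ SG, m ≤ n := by
    rintro m ⟨P, hP, rfl⟩
    have h1 : P.map Prod.fst = Multiset.map (uFun x y) Finset.univ.val := by
      rw [hP.1, hX, hY, map_uFun, Multiset.map_map]
      rfl
    have h2 : P.map Prod.snd = Multiset.map (vFun x y) Finset.univ.val := by
      rw [hP.2, hX, hY, map_vFun, Multiset.map_map]
      rfl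
    obtain ⟨σ, hσ⟩ := exists_equiv_of_marginals (Fintype.card (Fin a ⊕ Fin b))
      (Fin a ⊕ Fin b) (Fin b ⊕ Fin a) (uFun x y) (vFun x y) P rfl h1 h2
    have hσ' : P = pairsOf x y σ := hσ
    obtain ⟨M, hM, hle⟩ := exists_graph_matching x y hx hy t ht σ
    refine ⟨M.card, ⟨M, hM, rfl⟩, ?_⟩
    rw [hσ', countP_pairsOf]
    exact hle
  have bddG : BddAbove SG := by
    refine ⟨a + b, fun n hn => ?_⟩
    obtain ⟨m, hm, h⟩ := hGP n hn
    exact le_trans h (hSPbound m hm)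
  have hsup_eq : sSup SG = sSup SP := by
    apply le_antisymm
    · apply csSup_le ⟨0, hG0⟩
      intro n hn
      obtain ⟨m, hm, hnm⟩ := hGP n hn
      exact le_trans hnm (le_csSup bddP hm)
    · apply csSup_le hSPne
      intro m hm
      obtain ⟨n, hn, hmn⟩ := hPG m hm
      exact le_trans hmn (le_csSup bddG hn)
  refine ⟨hsup_eq, ?_⟩
  rw [hsup_eq]
  have hcompl : ∀ P, IsMatching X Y P →
      Multiset.countP (fun uv => t < pairCost uv.1 uv.2) P
        = (a + b) - Multiset.countP (fun uv => pairCost uv.1 uv.2 ≤ t) P := by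
    intro P hP
    have h1 := Multiset.card_eq_countP_add_countP (fun uv => pairCost uv.1 uv.2 ≤ t) P
    have h2 : Multiset.countP (fun uv => ¬ pairCost uv.1 uv.2 ≤ t) P
        = Multiset.countP (fun uv => t < pairCost uv.1 uv.2) P := by
      apply Multiset.countP_congr rfl
      intro uv _
      exact propext not_le
    rw [hcardP P hP, h2] at h1
    omega
  obtain ⟨Pstar, hPstar, hNeq⟩ := Nat.sSup_mem hSPne bddP
  apply le_antisymm
  · apply iInf_le_of_le ⟨Pstar, hPstar⟩
    have : Multiset.countP (fun uv => t < pairCost uv.1 uv.2) Pstar = a + b - sSup SP := by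
      rw [hcompl Pstar hPstar, ← hNeq]
    exact le_of_eq (by rw [this])
  · apply le_iInf
    rintro ⟨P, hP⟩
    have hle : Multiset.countP (fun uv => pairCost uv.1 uv.2 ≤ t) P ≤ sSup SP :=
      le_csSup bddP ⟨P, hP, rfl⟩
    have : a + b - sSup SP ≤ Multiset.countP (fun uv => t < pairCost uv.1 uv.2) P := by
      rw [hcompl P hP]
      exact Nat.sub_le_sub_left hle (a + b)
    exact_mod_cast Nat.cast_le.mpr this
end
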